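/- arXiv:1601.03782 — 9 statements merged into one kernel-verified Lean document; each statement's English description precedes it below -/
import Mathlib

section
/- For every state ρ on ℂ^d, 0 ≤ RoA(ρ) ≤ d − 1; moreover RoA(ρ) = 0 if and only if ρ is symmetric, i.e. E(ρ) = ρ. -/
open Matrix ComplexOrder

noncomputable section

/-- A state (density matrix): positive semidefinite with trace 1. -/
def IsState {d : ℕ} (ρ : Matrix (Fin d) (Fin d) ℂ) : Prop :=
  ρ.PosSemidef ∧ ρ.trace = 1

/-- Group average of a matrix under a unitary representation. -/
def grpAvg {d : ℕ} {G : Type*} [Fintype G] [Group G]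
    (U : G →* Matrix.unitaryGroup (Fin d) ℂ) (X : Matrix (Fin d) (Fin d) ℂ) :
    Matrix (Fin d) (Fin d) ℂ :=
  (Fintype.card G : ℂ)⁻¹ •
    ∑ g : G, (U g : Matrix (Fin d) (Fin d) ℂ) * X * ((U g : Matrix (Fin d) (Fin d) ℂ))ᴴ

/-- The robustness of asymmetry. -/
def RoA {d : ℕ} {G : Type*} [Fintype G] [Group G]
    (U : G →* Matrix.unitaryGroup (Fin d) ℂ) (ρ : Matrix (Fin d) (Fin d) ℂ) : ℝ :=
  sInf { s : ℝ | 0 ≤ s ∧ ∃ σ : Matrix (Fin d) (Fin d) ℂ,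
    IsState σ ∧ grpAvg U σ = σ ∧ ((1 + s) • σ - ρ).PosSemidef }

lemma trace_eq_sum_eigs {d : ℕ} {X : Matrix (Fin d) (Fin d) ℂ} (hX : X.IsHermitian) :
    X.trace = ∑ i, (hX.eigenvalues i : ℂ) := by
  conv_lhs => rw [hX.spectral_theorem, Unitary.conjStarAlgAut_apply]
  rw [Matrix.trace_mul_cycle,
    Matrix.mem_unitaryGroup_iff'.mp (Matrix.IsHermitian.eigenvectorUnitary hX).2, Matrix.one_mul,
    Matrix.trace_diagonal]
  rfl

lemma psd_smul {d : ℕ} {X : Matrix (Fin d) (Fin d) ℂ} (hX : X.PosSemidef) {c : ℂ}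
    (hc : 0 ≤ c) : (c • X).PosSemidef := by
  refine Matrix.PosSemidef.of_dotProduct_mulVec_nonneg ?_ (fun x => ?_)
  · unfold Matrix.IsHermitian
    rw [Matrix.conjTranspose_smul, hX.1.eq]
    congr 1
    simpa [Complex.star_def] using (Complex.conj_eq_iff_im.mpr ((Complex.le_def.mp hc).2.symm))
  · rw [Matrix.smul_mulVec, dotProduct_smul, smul_eq_mul]
    exact mul_nonneg hc (hX.dotProduct_mulVec_nonneg x)

lemma psd_trace_zero {d : ℕ} {X : Matrix (Fin d) (Fin d) ℂ} (hX : X.PosSemidef)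
    (h0 : X.trace = 0) : X = 0 := by
  have hH := hX.isHermitian
  have hsum : ∑ i, hH.eigenvalues i = 0 := by
    have h1 := (trace_eq_sum_eigs hH).symm.trans h0
    push_cast at h1
    exact_mod_cast h1
  have hz : ∀ i ∈ Finset.univ, hH.eigenvalues i = 0 :=
    (Finset.sum_eq_zero_iff_of_nonneg (fun i _ => hX.eigenvalues_nonneg i)).mp hsum
  have : Matrix.diagonal (RCLike.ofReal ∘ hH.eigenvalues) = (0 : Matrix (Fin d) (Fin d) ℂ) := by
    ext i j
    by_cases h : i = j <;> simp [Matrix.diagonal, h, hz j (Finset.mem_univ j)]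
  calc X = _ := hH.spectral_theorem
    _ = 0 := by rw [this]; simp

/-- A PSD matrix with trace `s` is dominated by `s • 1`. -/
lemma psd_smul_one_sub {d : ℕ} {X : Matrix (Fin d) (Fin d) ℂ} (hX : X.PosSemidef) {s : ℝ}
    (hs : X.trace = (s : ℂ)) : ((s : ℂ) • (1 : Matrix (Fin d) (Fin d) ℂ) - X).PosSemidef := by
  have hH := hX.isHermitian
  have hsum : ∑ i, hH.eigenvalues i = s := by
    have h1 := (trace_eq_sum_eigs hH).symm.trans hs
    exact_mod_cast h1
  have hle : ∀ i, hH.eigenvalues i ≤ s := by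
    intro i
    rw [← hsum]
    exact Finset.single_le_sum (fun j _ => hX.eigenvalues_nonneg j) (Finset.mem_univ i)
  have key : (s : ℂ) • (1 : Matrix (Fin d) (Fin d) ℂ) - X =
      (hH.eigenvectorUnitary : Matrix (Fin d) (Fin d) ℂ) *
        Matrix.diagonal (fun i => ((s - hH.eigenvalues i : ℝ) : ℂ)) *
        ((hH.eigenvectorUnitary : Matrix (Fin d) (Fin d) ℂ))ᴴ := by
    have hdiag : Matrix.diagonal (fun i => ((s - hH.eigenvalues i : ℝ) : ℂ)) =
        (s : ℂ) • (1 : Matrix (Fin d) (Fin d) ℂ) -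
          Matrix.diagonal (RCLike.ofReal ∘ hH.eigenvalues) := by
      ext i j
      by_cases h : i = j <;> simp [Matrix.diagonal, h, Matrix.one_apply, Complex.ofReal_sub]
    rw [hdiag, Matrix.mul_sub, Matrix.sub_mul, Matrix.mul_smul, Matrix.smul_mul, Matrix.mul_one,
      ← Matrix.star_eq_conjTranspose,
      Matrix.mem_unitaryGroup_iff.mp (Matrix.IsHermitian.eigenvectorUnitary hH).2]
    congr 1
    exact hH.spectral_theorem
  rw [key]
  refine Matrix.PosSemidef.mul_mul_conjTranspose_same ?_ _
  refine Matrix.PosSemidef.diagonal (Pi.le_def.mpr fun i => ?_)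
  have h2 : (0:ℝ) ≤ s - hH.eigenvalues i := by linarith [hle i]
  simpa using Complex.zero_le_real.mpr h2

section grpAvgLemmas
variable {d : ℕ} {G : Type*} [Fintype G] [Group G] (U : G →* Matrix.unitaryGroup (Fin d) ℂ)

lemma card_inv_nonneg : (0:ℂ) ≤ (Fintype.card G : ℂ)⁻¹ := by
  rw [← Complex.ofReal_natCast, ← Complex.ofReal_inv]
  exact Complex.zero_le_real.mpr (by positivity)

lemma grpAvg_posSemidef {X : Matrix (Fin d) (Fin d) ℂ} (hX : X.PosSemidef) :
    (grpAvg U X).PosSemidef := by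
  refine psd_smul ?_ card_inv_nonneg
  classical
  induction (Finset.univ : Finset G) using Finset.induction with
  | empty => simpa using Matrix.PosSemidef.zero
  | insert a s h ih =>
    rw [Finset.sum_insert h]
    exact (hX.mul_mul_conjTranspose_same _).add ih

lemma grpAvg_trace (X : Matrix (Fin d) (Fin d) ℂ) : (grpAvg U X).trace = X.trace := by
  have hcard : (Fintype.card G : ℂ) ≠ 0 := by
    exact_mod_cast Nat.cast_ne_zero.mpr Fintype.card_ne_zero
  rw [grpAvg, Matrix.trace_smul, Matrix.trace_sum]
  have : ∀ g : G, ((U g : Matrix (Fin d) (Fin d) ℂ) * X *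
      ((U g : Matrix (Fin d) (Fin d) ℂ))ᴴ).trace = X.trace := by
    intro g
    rw [Matrix.trace_mul_cycle, ← Matrix.star_eq_conjTranspose,
      Matrix.mem_unitaryGroup_iff'.mp (U g).2, Matrix.one_mul]
  simp only [this, Finset.sum_const, Finset.card_univ, nsmul_eq_mul, smul_eq_mul]
  rw [← mul_assoc, inv_mul_cancel₀ hcard, one_mul]

lemma grpAvg_sub (X Y : Matrix (Fin d) (Fin d) ℂ) :
    grpAvg U (X - Y) = grpAvg U X - grpAvg U Y := by
  simp only [grpAvg, Matrix.mul_sub, Matrix.sub_mul, Finset.sum_sub_distrib, smul_sub]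

lemma grpAvg_realSmul (c : ℝ) (X : Matrix (Fin d) (Fin d) ℂ) :
    grpAvg U (c • X) = c • grpAvg U X := by
  simp only [grpAvg, Matrix.mul_smul, Matrix.smul_mul, ← Finset.smul_sum]
  rw [smul_comm]

lemma grpAvg_smul_one (c : ℂ) :
    grpAvg U (c • (1 : Matrix (Fin d) (Fin d) ℂ)) = c • 1 := by
  have hcard : (Fintype.card G : ℂ) ≠ 0 := by
    exact_mod_cast Nat.cast_ne_zero.mpr Fintype.card_ne_zero
  have : ∀ g : G, (U g : Matrix (Fin d) (Fin d) ℂ) * (c • (1 : Matrix (Fin d) (Fin d) ℂ)) *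
      ((U g : Matrix (Fin d) (Fin d) ℂ))ᴴ = c • 1 := by
    intro g
    rw [Matrix.mul_smul, Matrix.mul_one, Matrix.smul_mul, ← Matrix.star_eq_conjTranspose,
      Matrix.mem_unitaryGroup_iff.mp (U g).2]
  rw [grpAvg]
  simp only [this, Finset.sum_const, Finset.card_univ]
  rw [← Nat.cast_smul_eq_nsmul ℂ, smul_smul, smul_smul, inv_mul_cancel₀ hcard, one_mul]

end grpAvgLemmas

theorem roa_bounds_and_faithful {d : ℕ} (hd : 1 ≤ d) {G : Type*} [Fintype G] [Group G]
    (U : G →* Matrix.unitaryGroup (Fin d) ℂ)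
    (ρ : Matrix (Fin d) (Fin d) ℂ) (hρ : IsState ρ) :
    (0 ≤ RoA U ρ ∧ RoA U ρ ≤ (d : ℝ) - 1) ∧ (RoA U ρ = 0 ↔ grpAvg U ρ = ρ) := by
  set S := { s : ℝ | 0 ≤ s ∧ ∃ σ : Matrix (Fin d) (Fin d) ℂ,
    IsState σ ∧ grpAvg U σ = σ ∧ ((1 + s) • σ - ρ).PosSemidef } with hSdef
  have hRoA : RoA U ρ = sInf S := rfl
  have hbdd : BddBelow S := ⟨0, fun s hs => hs.1⟩
  have hd0 : (d : ℂ) ≠ 0 := Nat.cast_ne_zero.mpr (by omega)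
  -- the maximally mixed state
  set σ0 : Matrix (Fin d) (Fin d) ℂ := (d : ℂ)⁻¹ • 1 with hσ0def
  have hσ0inv : (0:ℂ) ≤ (d : ℂ)⁻¹ := by
    rw [← Complex.ofReal_natCast, ← Complex.ofReal_inv]
    exact Complex.zero_le_real.mpr (by positivity)
  have hσ0 : IsState σ0 := by
    refine ⟨psd_smul Matrix.PosSemidef.one hσ0inv, ?_⟩
    rw [hσ0def, Matrix.trace_smul, Matrix.trace_one, smul_eq_mul]
    simp [inv_mul_cancel₀ hd0]
  have hmem : ((d : ℝ) - 1) ∈ S := by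
    refine ⟨by simp [sub_nonneg]; exact_mod_cast hd, σ0, hσ0, grpAvg_smul_one U _, ?_⟩
    have h1 : ((1 + ((d:ℝ) - 1)) : ℝ) • σ0 = (1 : Matrix (Fin d) (Fin d) ℂ) := by
      have h2 : ((1 + ((d:ℝ) - 1)) : ℝ) = (d : ℝ) := by ring
      rw [h2, hσ0def, ← smul_assoc]
      rw [Complex.real_smul]
      push_cast
      rw [mul_inv_cancel₀ hd0, one_smul]
    rw [h1]
    have := psd_smul_one_sub hρ.1 (s := 1) (by rw [hρ.2]; norm_num)
    simpa using this
  have hSne : S.Nonempty := ⟨_, hmem⟩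
  have h0le : 0 ≤ RoA U ρ := le_csInf hSne fun s hs => hs.1
  have hupper : RoA U ρ ≤ (d : ℝ) - 1 := csInf_le hbdd hmem
  refine ⟨⟨h0le, hupper⟩, ?_, ?_⟩
  · -- RoA = 0 → symmetric
    intro h
    -- quadratic form bound for each s ∈ S
    have hq : ∀ x : Fin d → ℂ, ∀ s ∈ S,
        |(star x ⬝ᵥ ((grpAvg U ρ - ρ) *ᵥ x)).re| ≤ s * (star x ⬝ᵥ x).re ∧
        (star x ⬝ᵥ ((grpAvg U ρ - ρ) *ᵥ x)).im = 0 := by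
      intro x s hs
      obtain ⟨hs0, σ, hσ, hσsym, hB⟩ := hs
      set B : Matrix (Fin d) (Fin d) ℂ := (1 + s) • σ - ρ with hBdef
      set C : Matrix (Fin d) (Fin d) ℂ := grpAvg U B with hCdef
      have hC : C.PosSemidef := grpAvg_posSemidef U hB
      have hBtr : B.trace = (s : ℂ) := by
        rw [hBdef, Matrix.trace_sub, Matrix.trace_smul, hρ.2, hσ.2]
        rw [Complex.real_smul]
        push_cast; ring
      have hCtr : C.trace = (s : ℂ) := by rw [hCdef, grpAvg_trace, hBtr]
      have hBC : B - C = grpAvg U ρ - ρ := by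
        rw [hCdef, hBdef, grpAvg_sub, grpAvg_realSmul, hσsym]
        abel
      have key : ∀ (Y : Matrix (Fin d) (Fin d) ℂ), Y.PosSemidef → Y.trace = (s:ℂ) →
          0 ≤ (star x ⬝ᵥ (Y *ᵥ x)).re ∧ (star x ⬝ᵥ (Y *ᵥ x)).im = 0 ∧
          (star x ⬝ᵥ (Y *ᵥ x)).re ≤ s * (star x ⬝ᵥ x).re := by
        intro Y hY hYtr
        have h1 := hY.dotProduct_mulVec_nonneg x
        have h2 := (psd_smul_one_sub hY hYtr).dotProduct_mulVec_nonneg x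
        rw [Matrix.sub_mulVec, Matrix.smul_mulVec, Matrix.one_mulVec,
          dotProduct_sub, dotProduct_smul] at h2
        have h2' := Complex.le_def.mp (sub_nonneg.mp h2)
        have h1' := Complex.le_def.mp h1
        have hr := Complex.le_def.mp (dotProduct_star_self_nonneg x)
        refine ⟨h1'.1, h1'.2.symm, ?_⟩
        have := h2'.1
        rw [smul_eq_mul] at this
        simpa [Complex.mul_re, Complex.ofReal_re, Complex.ofReal_im, ← hr.2] using this
      have hkB := key B hB hBtr
      have hkC := key C hC hCtr
      have hsplit : star x ⬝ᵥ ((grpAvg U ρ - ρ) *ᵥ x) =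
          star x ⬝ᵥ (B *ᵥ x) - star x ⬝ᵥ (C *ᵥ x) := by
        rw [← hBC, Matrix.sub_mulVec, dotProduct_sub]
      rw [hsplit]
      constructor
      · rw [Complex.sub_re, abs_sub_le_iff]
        constructor <;> nlinarith [hkB.1, hkB.2.2, hkC.1, hkC.2.2]
      · rw [Complex.sub_im, hkB.2.1, hkC.2.1]; ring
    have hqz : ∀ x : Fin d → ℂ, star x ⬝ᵥ ((grpAvg U ρ - ρ) *ᵥ x) = 0 := by
      intro x
      have him := (hq x _ hmem).2
      have hre : (star x ⬝ᵥ ((grpAvg U ρ - ρ) *ᵥ x)).re = 0 := by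
        by_contra hne
        set q := (star x ⬝ᵥ ((grpAvg U ρ - ρ) *ᵥ x)).re with hqdef
        set rr := (star x ⬝ᵥ x).re with hrrdef
        have hrr : 0 ≤ rr := (Complex.le_def.mp (dotProduct_star_self_nonneg x)).1
        have habs : 0 < |q| := abs_pos.mpr hne
        have hlt : sInf S < |q| / (rr + 1) := by
          rw [← hRoA, h]; positivity
        obtain ⟨s, hsS, hslt⟩ := exists_lt_of_csInf_lt hSne hlt
        have hbound := (hq x s hsS).1
        have hs0 : 0 ≤ s := hsS.1
        rw [← hqdef, ← hrrdef] at hbound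
        have : s * (rr + 1) < |q| := by
          rw [lt_div_iff₀ (by positivity)] at hslt
          exact hslt
        nlinarith
      exact Complex.ext hre him
    -- A is PSD with trace zero
    obtain ⟨_, σ, hσ, hσsym, hB⟩ := hmem
    have hherm : (grpAvg U ρ - ρ).IsHermitian := by
      have hC := grpAvg_posSemidef U hB
      have hBC : ((1 + ((d:ℝ)-1)) • σ - ρ) - grpAvg U ((1 + ((d:ℝ)-1)) • σ - ρ)
          = grpAvg U ρ - ρ := by
        rw [grpAvg_sub, grpAvg_realSmul, hσsym]; abel
      rw [← hBC]
      exact hB.1.sub hC.1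
    have hA : (grpAvg U ρ - ρ).PosSemidef := Matrix.PosSemidef.of_dotProduct_mulVec_nonneg hherm fun x => by rw [hqz x]
    have htr : (grpAvg U ρ - ρ).trace = 0 := by
      rw [Matrix.trace_sub, grpAvg_trace, sub_self]
    have := psd_trace_zero hA htr
    rwa [sub_eq_zero] at this
  · -- symmetric → RoA = 0
    intro h
    have h0mem : (0:ℝ) ∈ S := by
      refine ⟨le_refl 0, ρ, hρ, h, ?_⟩
      have : ((1 + (0:ℝ)) • ρ - ρ) = 0 := by
        norm_num
      rw [this]
      exact Matrix.PosSemidef.zero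
    exact le_antisymm (csInf_le hbdd h0mem) h0le
end
end

section
/- The robustness of asymmetry is monotonically nonincreasing on average under selective operations that preserve symmetric states: let K_1, …, K_m be d×d complex matrices with ∑_{l=1}^m K_l† K_l = I, and suppose that for every symmetric state σ and every l the matrix K_l σ K_l† satisfies E(K_l σ K_l†) = K_l σ K_l†. Then for every state ρ, writing p_l = Tr[K_l ρ K_l†], one has RoA(ρ) ≥ ∑_{l : p_l > 0} p_l · RoA(K_l ρ K_l† / p_l). -/
open Matrix ComplexOrder

noncomputable section

section Helpers

lemma psd_trace_nonneg {d : ℕ} {M : Matrix (Fin d) (Fin d) ℂ} (hM : M.PosSemidef) :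
    0 ≤ M.trace := by
  rw [Matrix.trace]
  refine Finset.sum_nonneg fun i _ => ?_
  have h := hM.dotProduct_mulVec_nonneg (Pi.single i 1)
  rw [← Pi.single_star, star_one] at h
  simpa [single_dotProduct] using h

lemma psd_trace_eq_re {d : ℕ} {M : Matrix (Fin d) (Fin d) ℂ} (hM : M.PosSemidef) :
    M.trace = (M.trace.re : ℂ) := by
  have h := Complex.le_def.mp (psd_trace_nonneg hM)
  exact Complex.ext rfl (by simpa using h.2.symm)

lemma psd_trace_re_nonneg {d : ℕ} {M : Matrix (Fin d) (Fin d) ℂ} (hM : M.PosSemidef) :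
    0 ≤ M.trace.re :=
  (Complex.le_def.mp (psd_trace_nonneg hM)).1

lemma psd_rsmul {d : ℕ} {M : Matrix (Fin d) (Fin d) ℂ} (hM : M.PosSemidef) {r : ℝ} (hr : 0 ≤ r) :
    (r • M).PosSemidef := by
  rw [RCLike.real_smul_eq_coe_smul (K := ℂ)]
  refine Matrix.PosSemidef.of_dotProduct_mulVec_nonneg ?_ fun x => ?_
  · unfold Matrix.IsHermitian
    rw [Matrix.conjTranspose_smul, hM.1.eq]
    congr 1
    simp [RCLike.star_def, Complex.conj_eq_iff_im]
  · rw [Matrix.smul_mulVec, dotProduct_smul, smul_eq_mul]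
    exact mul_nonneg (by simpa using Complex.zero_le_real.mpr hr) (hM.dotProduct_mulVec_nonneg x)

lemma grpAvg_csmul {d : ℕ} {G : Type*} [Fintype G] [Group G]
    (U : G →* Matrix.unitaryGroup (Fin d) ℂ) (c : ℂ) (X : Matrix (Fin d) (Fin d) ℂ) :
    grpAvg U (c • X) = c • grpAvg U X := by
  unfold grpAvg
  rw [smul_comm]
  congr 1
  rw [Finset.smul_sum]
  refine Finset.sum_congr rfl fun g _ => ?_
  rw [Matrix.mul_smul, Matrix.smul_mul]

lemma grpAvg_one {d : ℕ} {G : Type*} [Fintype G] [Group G]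
    (U : G →* Matrix.unitaryGroup (Fin d) ℂ) :
    grpAvg U (1 : Matrix (Fin d) (Fin d) ℂ) = 1 := by
  unfold grpAvg
  have h : ∀ g : G, (U g : Matrix (Fin d) (Fin d) ℂ) * (1 : Matrix (Fin d) (Fin d) ℂ) *
      ((U g : Matrix (Fin d) (Fin d) ℂ))ᴴ = 1 := fun g => by
    rw [Matrix.mul_one, ← Matrix.star_eq_conjTranspose]
    exact Matrix.mem_unitaryGroup_iff.mp (U g).2
  rw [Finset.sum_congr rfl fun g _ => h g, Finset.sum_const, Finset.card_univ,
    ← Nat.cast_smul_eq_nsmul ℂ, smul_smul, inv_mul_cancel₀, one_smul]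
  exact_mod_cast Fintype.card_ne_zero

lemma one_sub_psd {d : ℕ} {ρ : Matrix (Fin d) (Fin d) ℂ} (hρ : IsState ρ) :
    ((1 : Matrix (Fin d) (Fin d) ℂ) - ρ).PosSemidef := by
  obtain ⟨hpsd, htr⟩ := hρ
  open scoped MatrixOrder in obtain ⟨B, hB⟩ := CStarAlgebra.nonneg_iff_eq_star_mul_self.mp hpsd.nonneg
  rw [Matrix.star_eq_conjTranspose] at hB
  subst hB
  have hsum : ∑ j : Fin d, ∑ i : Fin d, ‖B i j‖ ^ 2 = 1 := by
    have h1 : (Bᴴ * B).trace = ∑ j : Fin d, ∑ i : Fin d, (‖B i j‖ ^ 2 : ℂ) := by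
      simp only [Matrix.trace, Matrix.diag, Matrix.mul_apply, Matrix.conjTranspose_apply]
      refine Finset.sum_congr rfl fun j _ => Finset.sum_congr rfl fun i _ => ?_
      rw [Complex.star_def, Complex.conj_mul']
      try norm_cast
    rw [htr] at h1
    have := congrArg Complex.re h1.symm
    simpa [← Complex.ofReal_pow] using this
  refine Matrix.PosSemidef.of_dotProduct_mulVec_nonneg (Matrix.isHermitian_one.sub (Matrix.isHermitian_conjTranspose_mul_self B)) fun x => ?_
  rw [Matrix.sub_mulVec, dotProduct_sub, Matrix.one_mulVec, sub_nonneg,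
    ← Matrix.mulVec_mulVec, Matrix.dotProduct_mulVec, Matrix.vecMul_conjTranspose, star_star]
  have hy : ∀ v : Fin d → ℂ, star v ⬝ᵥ v = ((∑ i, ‖v i‖ ^ 2 : ℝ) : ℂ) := by
    intro v
    simp only [dotProduct, Pi.star_apply, Complex.ofReal_sum]
    refine Finset.sum_congr rfl fun i _ => ?_
    rw [Complex.star_def, Complex.conj_mul']
    try norm_cast
  have hdx : dotProduct (star (B *ᵥ x)) (B *ᵥ x) = ((∑ i, ‖(B *ᵥ x) i‖ ^ 2 : ℝ) : ℂ) := by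
    simpa [dotProduct] using hy (B *ᵥ x)
  rw [hy x, hdx]
  rw [Complex.real_le_real]
  have key : ∀ i, ‖(B *ᵥ x) i‖ ^ 2 ≤ (∑ j, ‖B i j‖ ^ 2) * ∑ j, ‖x j‖ ^ 2 := by
    intro i
    have h1 : ‖(B *ᵥ x) i‖ ≤ ∑ j, ‖B i j‖ * ‖x j‖ := by
      simpa [Matrix.mulVec, dotProduct] using norm_sum_le Finset.univ (fun j => B i j * x j)
    calc ‖(B *ᵥ x) i‖ ^ 2 ≤ (∑ j, ‖B i j‖ * ‖x j‖) ^ 2 :=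
          pow_le_pow_left₀ (norm_nonneg _) h1 2
      _ ≤ (∑ j, ‖B i j‖ ^ 2) * ∑ j, ‖x j‖ ^ 2 :=
          Finset.sum_mul_sq_le_sq_mul_sq _ _ _
  calc ∑ i, ‖(B *ᵥ x) i‖ ^ 2 ≤ ∑ i, (∑ j, ‖B i j‖ ^ 2) * ∑ j, ‖x j‖ ^ 2 :=
        Finset.sum_le_sum fun i _ => key i
    _ = (∑ i, ∑ j, ‖B i j‖ ^ 2) * ∑ j, ‖x j‖ ^ 2 := by rw [Finset.sum_mul]
    _ = ∑ j, ‖x j‖ ^ 2 := by rw [Finset.sum_comm, hsum, one_mul]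

lemma roaSet_nonempty {d : ℕ} (hd : 1 ≤ d) {G : Type*} [Fintype G] [Group G]
    (U : G →* Matrix.unitaryGroup (Fin d) ℂ) {ρ : Matrix (Fin d) (Fin d) ℂ} (hρ : IsState ρ) :
    { s : ℝ | 0 ≤ s ∧ ∃ σ : Matrix (Fin d) (Fin d) ℂ,
      IsState σ ∧ grpAvg U σ = σ ∧ ((1 + s) • σ - ρ).PosSemidef }.Nonempty := by
  have hd1 : (1 : ℝ) ≤ (d : ℝ) := by exact_mod_cast hd
  have hdc : (d : ℂ) ≠ 0 := by
    exact_mod_cast Nat.one_le_iff_ne_zero.mp hd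
  refine ⟨(d : ℝ) - 1, by linarith, ((d : ℝ)⁻¹) • (1 : Matrix (Fin d) (Fin d) ℂ), ⟨?_, ?_⟩, ?_, ?_⟩
  · exact psd_rsmul Matrix.PosSemidef.one (inv_nonneg.mpr (by linarith))
  · rw [Matrix.trace_smul, Matrix.trace_one, Fintype.card_fin]
    rw [Complex.real_smul]
    push_cast
    field_simp
  · rw [RCLike.real_smul_eq_coe_smul (K := ℂ), grpAvg_csmul, grpAvg_one]
  · have : (1 + ((d : ℝ) - 1)) • ((d : ℝ)⁻¹ • (1 : Matrix (Fin d) (Fin d) ℂ)) = 1 := by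
      rw [smul_smul]
      rw [show (1 + ((d : ℝ) - 1)) * (d : ℝ)⁻¹ = 1 by field_simp; ring, one_smul]
    rw [this]
    exact one_sub_psd hρ

end Helpers

theorem roa_monotone_selective {d : ℕ} (hd : 1 ≤ d) {G : Type*} [Fintype G] [Group G]
    (U : G →* Matrix.unitaryGroup (Fin d) ℂ)
    {m : ℕ} (K : Fin m → Matrix (Fin d) (Fin d) ℂ)
    (hK : ∑ l, (K l)ᴴ * K l = 1)
    (hfree : ∀ σ : Matrix (Fin d) (Fin d) ℂ, IsState σ → grpAvg U σ = σ →
      ∀ l, grpAvg U (K l * σ * (K l)ᴴ) = K l * σ * (K l)ᴴ)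
    (ρ : Matrix (Fin d) (Fin d) ℂ) (hρ : IsState ρ) :
    ∑ l ∈ Finset.univ.filter (fun l => 0 < (K l * ρ * (K l)ᴴ).trace.re),
        (K l * ρ * (K l)ᴴ).trace.re *
          RoA U (((K l * ρ * (K l)ᴴ).trace.re)⁻¹ • (K l * ρ * (K l)ᴴ))
      ≤ RoA U ρ := by
  classical
  refine le_csInf (roaSet_nonempty hd U hρ) ?_
  rintro s ⟨hs0, σ, hσst, hσsym, hpsd⟩
  have hApsd : ∀ l, (K l * ρ * (K l)ᴴ).PosSemidef :=
    fun l => hρ.1.mul_mul_conjTranspose_same (K l)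
  have hBpsd : ∀ l, (K l * σ * (K l)ᴴ).PosSemidef :=
    fun l => hσst.1.mul_mul_conjTranspose_same (K l)
  have hq0 : ∀ l, 0 ≤ (K l * σ * (K l)ᴴ).trace.re := fun l => psd_trace_re_nonneg (hBpsd l)
  have hp0 : ∀ l, 0 ≤ (K l * ρ * (K l)ᴴ).trace.re := fun l => psd_trace_re_nonneg (hApsd l)
  have hdiff : ∀ l, ((1 + s) • (K l * σ * (K l)ᴴ) - K l * ρ * (K l)ᴴ).PosSemidef := by
    intro l
    have h := hpsd.mul_mul_conjTranspose_same (K l)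
    have heq : K l * ((1 + s) • σ - ρ) * (K l)ᴴ
        = (1 + s) • (K l * σ * (K l)ᴴ) - K l * ρ * (K l)ᴴ := by
      rw [Matrix.mul_sub, Matrix.sub_mul, Matrix.mul_smul, Matrix.smul_mul]
    rwa [heq] at h
  have hce : ∀ l, (K l * ρ * (K l)ᴴ).trace.re ≤ (1 + s) * (K l * σ * (K l)ᴴ).trace.re := by
    intro l
    have h := psd_trace_re_nonneg (hdiff l)
    rw [Matrix.trace_sub, Matrix.trace_smul, Complex.sub_re, Complex.real_smul,
      Complex.re_ofReal_mul] at h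
    linarith
  have hsum : ∀ τ : Matrix (Fin d) (Fin d) ℂ, τ.trace = 1 →
      ∑ l, (K l * τ * (K l)ᴴ).trace = 1 := by
    intro τ hτ
    have h1 : ∀ l, (K l * τ * (K l)ᴴ).trace = ((K l)ᴴ * K l * τ).trace := fun l =>
      Matrix.trace_mul_cycle (K l) τ (K l)ᴴ
    rw [Finset.sum_congr rfl fun l _ => h1 l, ← Matrix.trace_sum, ← Finset.sum_mul, hK,
      one_mul, hτ]
  have hsumq : ∑ l, (K l * σ * (K l)ᴴ).trace.re = 1 := by
    have := congrArg Complex.re (hsum σ hσst.2)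
    simpa [Complex.re_sum] using this
  have hsump : ∑ l, (K l * ρ * (K l)ᴴ).trace.re = 1 := by
    have := congrArg Complex.re (hsum ρ hρ.2)
    simpa [Complex.re_sum] using this
  have key : ∀ l, 0 < (K l * ρ * (K l)ᴴ).trace.re →
      RoA U (((K l * ρ * (K l)ᴴ).trace.re)⁻¹ • (K l * ρ * (K l)ᴴ))
        ≤ (1 + s) * (K l * σ * (K l)ᴴ).trace.re / (K l * ρ * (K l)ᴴ).trace.re - 1 := by
    intro l hp
    set pl := (K l * ρ * (K l)ᴴ).trace.re with hpl
    set ql := (K l * σ * (K l)ᴴ).trace.re with hql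
    have hqlpos : 0 < ql := by nlinarith [hce l, hq0 l]
    refine csInf_le ⟨0, fun t ht => ht.1⟩ ?_
    refine ⟨?_, ql⁻¹ • (K l * σ * (K l)ᴴ), ⟨?_, ?_⟩, ?_, ?_⟩
    · rw [sub_nonneg, le_div_iff₀ hp]
      linarith [hce l]
    · exact psd_rsmul (hBpsd l) (inv_nonneg.mpr hqlpos.le)
    · rw [Matrix.trace_smul, psd_trace_eq_re (hBpsd l), ← hql, Complex.real_smul]
      norm_cast
      field_simp
    · rw [RCLike.real_smul_eq_coe_smul (K := ℂ), grpAvg_csmul, hfree σ hσst hσsym l]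
    · have heq : (1 + ((1 + s) * ql / pl - 1)) • (ql⁻¹ • (K l * σ * (K l)ᴴ))
          - pl⁻¹ • (K l * ρ * (K l)ᴴ)
          = pl⁻¹ • ((1 + s) • (K l * σ * (K l)ᴴ) - K l * ρ * (K l)ᴴ) := by
        rw [smul_sub, smul_smul, smul_smul]
        congr 2
        field_simp
        ring
      rw [heq]
      exact psd_rsmul (hdiff l) (inv_nonneg.mpr hp.le)
  calc ∑ l ∈ Finset.univ.filter (fun l => 0 < (K l * ρ * (K l)ᴴ).trace.re),
        (K l * ρ * (K l)ᴴ).trace.re *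
          RoA U (((K l * ρ * (K l)ᴴ).trace.re)⁻¹ • (K l * ρ * (K l)ᴴ))
      ≤ ∑ l ∈ Finset.univ.filter (fun l => 0 < (K l * ρ * (K l)ᴴ).trace.re),
        (K l * ρ * (K l)ᴴ).trace.re *
          ((1 + s) * (K l * σ * (K l)ᴴ).trace.re / (K l * ρ * (K l)ᴴ).trace.re - 1) := by
        refine Finset.sum_le_sum fun l hl => ?_
        have hp := (Finset.mem_filter.mp hl).2
        exact mul_le_mul_of_nonneg_left (key l hp) (hp0 l)
    _ = ∑ l ∈ Finset.univ.filter (fun l => 0 < (K l * ρ * (K l)ᴴ).trace.re),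
          ((1 + s) * (K l * σ * (K l)ᴴ).trace.re - (K l * ρ * (K l)ᴴ).trace.re) := by
        refine Finset.sum_congr rfl fun l hl => ?_
        have hp := (Finset.mem_filter.mp hl).2
        have hpne : (K l * ρ * (K l)ᴴ).trace.re ≠ 0 := ne_of_gt hp
        field_simp
    _ = (1 + s) * (∑ l ∈ Finset.univ.filter (fun l => 0 < (K l * ρ * (K l)ᴴ).trace.re),
            (K l * σ * (K l)ᴴ).trace.re)
          - ∑ l ∈ Finset.univ.filter (fun l => 0 < (K l * ρ * (K l)ᴴ).trace.re),
            (K l * ρ * (K l)ᴴ).trace.re := by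
        rw [Finset.sum_sub_distrib, Finset.mul_sum]
    _ ≤ s := by
        have h1 : ∑ l ∈ Finset.univ.filter (fun l => 0 < (K l * ρ * (K l)ᴴ).trace.re),
            (K l * σ * (K l)ᴴ).trace.re ≤ 1 := by
          rw [← hsumq]
          exact Finset.sum_le_sum_of_subset_of_nonneg (Finset.filter_subset _ _)
            fun l _ _ => hq0 l
        have h2 : ∑ l ∈ Finset.univ.filter (fun l => 0 < (K l * ρ * (K l)ᴴ).trace.re),
            (K l * ρ * (K l)ᴴ).trace.re = 1 := by
          rw [← hsump]
          refine Finset.sum_subset (Finset.filter_subset _ _) fun l _ hl => ?_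
          simp only [Finset.mem_filter, Finset.mem_univ, true_and, not_lt] at hl
          exact le_antisymm hl (hp0 l)
        rw [h2]
        nlinarith [mul_le_mul_of_nonneg_left h1 (by linarith : (0:ℝ) ≤ 1 + s)]
end
end

section
/- Purity-based lower bounds on the robustness of asymmetry: for every state ρ on ℂ^d and every real c > 0 such that c·I − E(ρ) is positive semidefinite, RoA(ρ) ≥ (Re Tr[ρ²] − Re Tr[E(ρ)²]) / c. In particular, RoA(ρ) ≥ (Re Tr[ρ²] − Re Tr[E(ρ)²]) / √(Re Tr[E(ρ)²]) and RoA(ρ) ≥ Re Tr[ρ²] − Re Tr[E(ρ)²]. -/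
open Matrix ComplexOrder

noncomputable section

namespace RoAHelpers

set_option linter.unusedSectionVars false

section Spectral

variable {m : Type*} [Fintype m] [DecidableEq m]

lemma trace_eq_sum_eig {A : Matrix m m ℂ} (hA : A.IsHermitian) :
    A.trace = ∑ i, (hA.eigenvalues i : ℂ) := by
  conv_lhs => rw [hA.spectral_theorem, Unitary.conjStarAlgAut_apply]
  rw [trace_mul_cycle, (Matrix.mem_unitaryGroup_iff').mp (hA.eigenvectorUnitary).2,
    one_mul, trace_diagonal]
  rfl

lemma trace_sq_eq_sum_eig {A : Matrix m m ℂ} (hA : A.IsHermitian) :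
    (A * A).trace = ∑ i, ((hA.eigenvalues i : ℂ))^2 := by
  have hU := (Matrix.mem_unitaryGroup_iff').mp (hA.eigenvectorUnitary).2
  have h2 : A * A = (hA.eigenvectorUnitary : Matrix m m ℂ) *
      (diagonal (RCLike.ofReal ∘ hA.eigenvalues) * diagonal (RCLike.ofReal ∘ hA.eigenvalues)) *
      (star (hA.eigenvectorUnitary : Matrix m m ℂ)) := by
    conv_lhs => rw [hA.spectral_theorem, Unitary.conjStarAlgAut_apply]
    simp only [mul_assoc]
    rw [← mul_assoc (star (hA.eigenvectorUnitary : Matrix m m ℂ))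
      (hA.eigenvectorUnitary : Matrix m m ℂ), hU, one_mul]
  rw [h2, trace_mul_cycle, ← mul_assoc, hU, one_mul, diagonal_mul_diagonal, trace_diagonal]
  simp [pow_two]

lemma smul_one_sub_posSemidef {A : Matrix m m ℂ} (hA : A.IsHermitian) {c : ℝ}
    (h : ∀ i, hA.eigenvalues i ≤ c) :
    (c • (1 : Matrix m m ℂ) - A).PosSemidef := by
  have hU := (Matrix.mem_unitaryGroup_iff).mp (hA.eigenvectorUnitary).2
  have key : c • (1 : Matrix m m ℂ) - A = (hA.eigenvectorUnitary : Matrix m m ℂ) *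
      diagonal (fun i => ((c - hA.eigenvalues i : ℝ) : ℂ)) *
      (star (hA.eigenvectorUnitary : Matrix m m ℂ)) := by
    have h1 : diagonal (fun i => ((c - hA.eigenvalues i : ℝ) : ℂ)) =
        c • (1 : Matrix m m ℂ) - diagonal (RCLike.ofReal ∘ hA.eigenvalues) := by
      ext i j
      by_cases hij : i = j <;>
        simp [diagonal, hij, Matrix.one_apply, Complex.ofReal_sub, Matrix.smul_apply]
    rw [h1, mul_sub, sub_mul,
      ← Unitary.conjStarAlgAut_apply (S := ℂ) _ (diagonal (RCLike.ofReal ∘ hA.eigenvalues)),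
      ← hA.spectral_theorem]
    congr 1
    rw [mul_smul_comm, smul_mul_assoc, mul_one, hU]
  rw [key]
  refine Matrix.PosSemidef.mul_mul_conjTranspose_same ?_ _
  refine Matrix.posSemidef_diagonal_iff.mpr fun i => ?_
  rw [Complex.zero_le_real]
  linarith [h i]

lemma psd_trace_re_nonneg {A : Matrix m m ℂ} (hA : A.PosSemidef) : 0 ≤ A.trace.re := by
  rw [trace_eq_sum_eig hA.1, Complex.re_sum]
  apply Finset.sum_nonneg
  intro i _
  simpa using hA.eigenvalues_nonneg i

lemma trace_mul_psd_re_nonneg {A B : Matrix m m ℂ} (hA : A.PosSemidef) (hB : B.PosSemidef) :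
    0 ≤ (A * B).trace.re := by
  obtain ⟨C, rfl⟩ : ∃ C : Matrix m m ℂ, B = Cᴴ * C := by
    open MatrixOrder in
    exact ⟨CFC.sqrt B, by
      rw [(CFC.sqrt_nonneg B).posSemidef.1.eq, CFC.sqrt_mul_sqrt_self B hB.nonneg]⟩
  have h : (A * (Cᴴ * C)).trace = (C * A * Cᴴ).trace := by
    rw [← mul_assoc, trace_mul_cycle, mul_assoc]
  rw [h]
  exact psd_trace_re_nonneg (hA.mul_mul_conjTranspose_same C)

lemma real_smul_psd {r : ℝ} (hr : 0 ≤ r) {A : Matrix m m ℂ} (hA : A.PosSemidef) :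
    ((r : ℂ) • A).PosSemidef := by
  refine Matrix.PosSemidef.of_dotProduct_mulVec_nonneg ?_ ?_
  · unfold Matrix.IsHermitian
    rw [conjTranspose_smul, hA.1]
    congr 1
    simp [Complex.star_def, Complex.conj_ofReal]
  · intro x
    rw [smul_mulVec, dotProduct_smul]
    have h0 := hA.dotProduct_mulVec_nonneg x
    rw [Complex.nonneg_iff] at h0 ⊢
    constructor
    · simp only [smul_eq_mul, Complex.mul_re, Complex.ofReal_re, Complex.ofReal_im, zero_mul,
        sub_zero]
      exact mul_nonneg hr h0.1
    · simp only [smul_eq_mul, Complex.mul_im, Complex.ofReal_re, Complex.ofReal_im, zero_mul,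
        add_zero, ← h0.2, mul_zero]

end Spectral

section Avg

variable {d : ℕ} {G : Type*} [Fintype G] [Group G]
  (U : G →* Matrix.unitaryGroup (Fin d) ℂ)

lemma cardG_ne : (Fintype.card G : ℂ) ≠ 0 := by
  exact_mod_cast Nat.cast_ne_zero.mpr Fintype.card_ne_zero

lemma coe_U_inv (g : G) :
    ((U g⁻¹ : Matrix (Fin d) (Fin d) ℂ)) = ((U g : Matrix (Fin d) (Fin d) ℂ))ᴴ := by
  rw [map_inv, ← Matrix.star_eq_conjTranspose]
  rfl

lemma grpAvg_trace (X : Matrix (Fin d) (Fin d) ℂ) : (grpAvg U X).trace = X.trace := by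
  unfold grpAvg
  rw [trace_smul, trace_sum]
  have h : ∀ g : G, ((U g : Matrix (Fin d) (Fin d) ℂ) * X *
      ((U g : Matrix (Fin d) (Fin d) ℂ))ᴴ).trace = X.trace := by
    intro g
    rw [trace_mul_cycle, ← Matrix.star_eq_conjTranspose,
      (Matrix.mem_unitaryGroup_iff').mp (U g).2, one_mul]
  simp only [h, Finset.sum_const, Finset.card_univ, nsmul_eq_mul, smul_eq_mul]
  rw [← mul_assoc, inv_mul_cancel₀ (cardG_ne (G := G)), one_mul]

lemma grpAvg_sub (X Y : Matrix (Fin d) (Fin d) ℂ) :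
    grpAvg U (X - Y) = grpAvg U X - grpAvg U Y := by
  unfold grpAvg
  rw [← smul_sub, ← Finset.sum_sub_distrib]
  congr 1
  apply Finset.sum_congr rfl
  intro g _
  rw [mul_sub, sub_mul]

lemma grpAvg_invariant (h : G) (X : Matrix (Fin d) (Fin d) ℂ) :
    (U h : Matrix (Fin d) (Fin d) ℂ) * grpAvg U X * ((U h : Matrix (Fin d) (Fin d) ℂ))ᴴ
      = grpAvg U X := by
  unfold grpAvg
  rw [Matrix.mul_smul, Matrix.smul_mul]
  congr 1
  rw [Finset.mul_sum, Finset.sum_mul]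
  apply Fintype.sum_equiv (Equiv.mulLeft h)
  intro g
  simp only [Equiv.coe_mulLeft]
  rw [_root_.map_mul]
  have h2 : ((U h * U g : Matrix.unitaryGroup (Fin d) ℂ) : Matrix (Fin d) (Fin d) ℂ)
      = (U h : Matrix (Fin d) (Fin d) ℂ) * (U g : Matrix (Fin d) (Fin d) ℂ) := rfl
  rw [h2, conjTranspose_mul]
  simp only [mul_assoc]

lemma grpAvg_idem (X : Matrix (Fin d) (Fin d) ℂ) : grpAvg U (grpAvg U X) = grpAvg U X := by
  conv_lhs => rw [grpAvg]
  have h : ∀ g : G, (U g : Matrix (Fin d) (Fin d) ℂ) * grpAvg U X *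
      ((U g : Matrix (Fin d) (Fin d) ℂ))ᴴ = grpAvg U X := fun g => grpAvg_invariant U g X
  simp only [h, Finset.sum_const, Finset.card_univ]
  rw [← Nat.cast_smul_eq_nsmul ℂ, smul_smul, inv_mul_cancel₀ (cardG_ne (G := G)), one_smul]

lemma grpAvg_selfadj (X Y : Matrix (Fin d) (Fin d) ℂ) :
    (X * grpAvg U Y).trace = (grpAvg U X * Y).trace := by
  unfold grpAvg
  rw [Matrix.mul_smul, Matrix.smul_mul, trace_smul, trace_smul]
  congr 1
  rw [Finset.mul_sum, Finset.sum_mul, trace_sum, trace_sum]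
  apply Fintype.sum_equiv (Equiv.inv G)
  intro g
  simp only [Equiv.inv_apply]
  rw [coe_U_inv, conjTranspose_conjTranspose]
  conv_rhs => rw [mul_assoc, mul_assoc]
  rw [trace_mul_comm ((U g : Matrix (Fin d) (Fin d) ℂ))ᴴ]
  simp only [mul_assoc]

lemma grpAvg_posSemidef {X : Matrix (Fin d) (Fin d) ℂ} (hX : X.PosSemidef) :
    (grpAvg U X).PosSemidef := by
  unfold grpAvg
  have hS : (∑ g : G, (U g : Matrix (Fin d) (Fin d) ℂ) * X *
      ((U g : Matrix (Fin d) (Fin d) ℂ))ᴴ).PosSemidef := by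
    refine Finset.sum_induction _ (fun M => Matrix.PosSemidef M)
      (fun a b ha hb => ha.add hb) Matrix.PosSemidef.zero fun g _ => ?_
    exact hX.mul_mul_conjTranspose_same _
  have hcast : ((Fintype.card G : ℂ))⁻¹ = Complex.ofReal ((Fintype.card G : ℝ)⁻¹) := by
    rw [Complex.ofReal_inv]; norm_num
  rw [hcast]
  exact real_smul_psd (inv_nonneg.mpr (Nat.cast_nonneg _)) hS

lemma grpAvg_isState {X : Matrix (Fin d) (Fin d) ℂ} (hX : IsState X) :
    IsState (grpAvg U X) :=
  ⟨grpAvg_posSemidef U hX.1, by rw [grpAvg_trace, hX.2]⟩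

lemma roa_set_nonempty {ρ : Matrix (Fin d) (Fin d) ℂ} (hρ : IsState ρ) :
    ((Fintype.card G : ℝ) - 1) ∈ { s : ℝ | 0 ≤ s ∧ ∃ σ : Matrix (Fin d) (Fin d) ℂ,
      IsState σ ∧ grpAvg U σ = σ ∧ ((1 + s) • σ - ρ).PosSemidef } := by
  have hcard : (1 : ℝ) ≤ (Fintype.card G : ℝ) := by
    exact_mod_cast Fintype.card_pos
  classical
  refine ⟨by linarith, grpAvg U ρ, grpAvg_isState U hρ, grpAvg_idem U ρ, ?_⟩
  have h1 : (1 + ((Fintype.card G : ℝ) - 1)) • grpAvg U ρ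
      = ∑ g : G, (U g : Matrix (Fin d) (Fin d) ℂ) * ρ * ((U g : Matrix (Fin d) (Fin d) ℂ))ᴴ := by
    unfold grpAvg
    rw [add_sub_cancel]
    rw [show ∀ M : Matrix (Fin d) (Fin d) ℂ, ((Fintype.card G : ℝ)) • M
        = (Fintype.card G : ℂ) • M from fun M => by
      rw [Nat.cast_smul_eq_nsmul ℝ, Nat.cast_smul_eq_nsmul ℂ]]
    rw [smul_smul, mul_inv_cancel₀ (cardG_ne (G := G)), one_smul]
  rw [h1]
  have h2 : ∑ g : G, (U g : Matrix (Fin d) (Fin d) ℂ) * ρ * ((U g : Matrix (Fin d) (Fin d) ℂ))ᴴ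
      - ρ = ∑ g ∈ Finset.univ.erase (1 : G),
        (U g : Matrix (Fin d) (Fin d) ℂ) * ρ * ((U g : Matrix (Fin d) (Fin d) ℂ))ᴴ := by
    rw [← Finset.add_sum_erase Finset.univ _ (Finset.mem_univ (1 : G))]
    rw [show ((U (1 : G) : Matrix (Fin d) (Fin d) ℂ)) = 1 by rw [_root_.map_one]; rfl]
    rw [one_mul, conjTranspose_one, mul_one, add_sub_cancel_left]
  rw [h2]
  refine Finset.sum_induction _ (fun M => Matrix.PosSemidef M)
    (fun a b ha hb => ha.add hb) Matrix.PosSemidef.zero fun g _ => ?_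
  exact hρ.1.mul_mul_conjTranspose_same _

lemma key_bound {ρ : Matrix (Fin d) (Fin d) ℂ} (hρ : IsState ρ) {c : ℝ} (hc : 0 < c)
    (hcI : (c • (1 : Matrix (Fin d) (Fin d) ℂ) - grpAvg U ρ).PosSemidef)
    {s : ℝ} (hs : s ∈ { s : ℝ | 0 ≤ s ∧ ∃ σ : Matrix (Fin d) (Fin d) ℂ,
      IsState σ ∧ grpAvg U σ = σ ∧ ((1 + s) • σ - ρ).PosSemidef }) :
    ((ρ * ρ).trace.re - (grpAvg U ρ * grpAvg U ρ).trace.re) / c ≤ s := by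
  obtain ⟨hs0, σ, hσ, hσsym, hA⟩ := hs
  set R := grpAvg U ρ with hR
  set A := (1 + s) • σ - ρ with hAdef
  set Δ := ρ - R with hΔ
  -- trace identities
  have h1 : (ρ * R).trace = (R * R).trace := by
    conv_lhs => rw [hR, ← grpAvg_idem U ρ]
    rw [grpAvg_selfadj U ρ (grpAvg U ρ)]
  have h1' : (R * ρ).trace = (R * R).trace := by rw [trace_mul_comm, h1]
  have h2 : (Δ * σ).trace = 0 := by
    conv_lhs => rw [← hσsym]
    rw [grpAvg_selfadj U Δ σ]
    have hΔ0 : grpAvg U Δ = 0 := by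
      rw [hΔ, grpAvg_sub, hR, grpAvg_idem, sub_self]
    rw [hΔ0, zero_mul, trace_zero]
  have h3 : (Δ * ρ).trace = (ρ * ρ).trace - (R * R).trace := by
    rw [hΔ, sub_mul, trace_sub, h1']
  -- Δ * A
  have h4 : (Δ * A).trace = -((ρ * ρ).trace - (R * R).trace) := by
    have e : Δ * A = (1 + s) • (Δ * σ) - Δ * ρ := by
      rw [hAdef, mul_sub, mul_smul_comm]
    rw [e, trace_sub, trace_smul, h2, smul_zero, zero_sub, h3]
  have h5 : (R * A).trace = (ρ * A).trace + ((ρ * ρ).trace - (R * R).trace) := by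
    have e : Δ * A = ρ * A - R * A := by rw [hΔ, sub_mul]
    rw [e, trace_sub] at h4
    linear_combination -h4
  -- real parts
  have hρA : 0 ≤ (ρ * A).trace.re := trace_mul_psd_re_nonneg hρ.1 hA
  have hRA : (R * A).trace.re ≤ c * A.trace.re := by
    have h6 : 0 ≤ ((c • (1 : Matrix (Fin d) (Fin d) ℂ) - R) * A).trace.re :=
      trace_mul_psd_re_nonneg hcI hA
    have e : (c • (1 : Matrix (Fin d) (Fin d) ℂ) - R) * A = c • A - R * A := by
      rw [sub_mul, smul_mul_assoc, one_mul]
    rw [e, trace_sub, Complex.sub_re] at h6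
    have : (c • A.trace).re = c * A.trace.re := by
      rw [Complex.real_smul, Complex.re_ofReal_mul]
    rw [trace_smul, this] at h6
    linarith
  have hAtr : A.trace.re = s := by
    rw [hAdef, trace_sub, trace_smul, hρ.2, hσ.2]
    simp [Complex.real_smul]
  have hfin : (ρ * ρ).trace.re - (R * R).trace.re ≤ c * s := by
    have := congrArg Complex.re h5
    rw [Complex.add_re, Complex.sub_re] at this
    rw [hAtr] at hRA
    linarith
  rw [div_le_iff₀ hc]
  linarith [hfin]

end Avg

end RoAHelpers

open RoAHelpers in
theorem roa_purity_lower_bounds {d : ℕ} (hd : 1 ≤ d) {G : Type*} [Fintype G] [Group G]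
    (U : G →* Matrix.unitaryGroup (Fin d) ℂ)
    (ρ : Matrix (Fin d) (Fin d) ℂ) (hρ : IsState ρ) :
    (∀ c : ℝ, 0 < c → (c • (1 : Matrix (Fin d) (Fin d) ℂ) - grpAvg U ρ).PosSemidef →
      ((ρ * ρ).trace.re - (grpAvg U ρ * grpAvg U ρ).trace.re) / c ≤ RoA U ρ) ∧
    ((ρ * ρ).trace.re - (grpAvg U ρ * grpAvg U ρ).trace.re) /
        Real.sqrt ((grpAvg U ρ * grpAvg U ρ).trace.re) ≤ RoA U ρ ∧
    (ρ * ρ).trace.re - (grpAvg U ρ * grpAvg U ρ).trace.re ≤ RoA U ρ := by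
  have hmain : ∀ c : ℝ, 0 < c →
      (c • (1 : Matrix (Fin d) (Fin d) ℂ) - grpAvg U ρ).PosSemidef →
      ((ρ * ρ).trace.re - (grpAvg U ρ * grpAvg U ρ).trace.re) / c ≤ RoA U ρ := by
    intro c hc hcI
    apply le_csInf (Set.nonempty_of_mem (roa_set_nonempty U hρ))
    intro s hs
    exact key_bound U hρ hc hcI hs
  refine ⟨hmain, ?_, ?_⟩
  · -- second bound
    have hR : IsState (grpAvg U ρ) := grpAvg_isState U hρ
    have hH : (grpAvg U ρ).IsHermitian := hR.1.1
    have htr2 : (grpAvg U ρ * grpAvg U ρ).trace.re = ∑ i, hH.eigenvalues i ^ 2 := by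
      rw [trace_sq_eq_sum_eig hH, Complex.re_sum]
      apply Finset.sum_congr rfl
      intro i _
      simp [← Complex.ofReal_pow]
    have htr1 : ∑ i, hH.eigenvalues i = 1 := by
      have := trace_eq_sum_eig hH
      rw [hR.2] at this
      have := congrArg Complex.re this.symm
      rw [Complex.re_sum] at this
      simpa using this
    have hpos : 0 < (grpAvg U ρ * grpAvg U ρ).trace.re := by
      rw [htr2]
      rcases lt_or_eq_of_le (Finset.sum_nonneg fun i _ => sq_nonneg (hH.eigenvalues i)) with h | h
      · exact h
      · exfalso
        have hz : ∀ i ∈ Finset.univ, hH.eigenvalues i ^ 2 = 0 :=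
          (Finset.sum_eq_zero_iff_of_nonneg fun i _ => sq_nonneg _).mp h.symm
        have : ∑ i, hH.eigenvalues i = 0 :=
          Finset.sum_eq_zero fun i hi => by
            have := hz i hi
            exact (pow_eq_zero_iff two_ne_zero).mp this
        rw [htr1] at this
        exact one_ne_zero this
    have hcpos : 0 < Real.sqrt ((grpAvg U ρ * grpAvg U ρ).trace.re) := Real.sqrt_pos.mpr hpos
    apply hmain _ hcpos
    apply smul_one_sub_posSemidef hH
    intro i
    rw [htr2]
    calc hH.eigenvalues i = Real.sqrt (hH.eigenvalues i ^ 2) := by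
          rw [Real.sqrt_sq (hR.1.eigenvalues_nonneg i)]
      _ ≤ Real.sqrt (∑ j, hH.eigenvalues j ^ 2) := by
          apply Real.sqrt_le_sqrt
          exact Finset.single_le_sum (fun j _ => sq_nonneg (hH.eigenvalues j))
            (Finset.mem_univ i)
  · -- third bound
    have hR : IsState (grpAvg U ρ) := grpAvg_isState U hρ
    have hH : (grpAvg U ρ).IsHermitian := hR.1.1
    have htr1 : ∑ i, hH.eigenvalues i = 1 := by
      have := trace_eq_sum_eig hH
      rw [hR.2] at this
      have := congrArg Complex.re this.symm
      rw [Complex.re_sum] at this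
      simpa using this
    have h1 := hmain 1 one_pos (by
      apply smul_one_sub_posSemidef hH
      intro i
      rw [← htr1]
      exact Finset.single_le_sum (fun j _ => hR.1.eigenvalues_nonneg j) (Finset.mem_univ i))
    rwa [div_one] at h1
end
end

section
/- Upper bound on the success probability of covariant channel discrimination: for every state ρ on ℂ^d, every probability distribution p : G → ℝ with p_g ≥ 0 and ∑_{g∈G} p_g = 1, and every POVM {M_g}_{g∈G} (each M_g positive semidefinite and ∑_{g∈G} M_g = I), ∑_{g∈G} p_g · Re Tr[U_g ρ U_g† · M_g] ≤ (1 + RoA(ρ)) · max_{g∈G} p_g. -/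
open Matrix ComplexOrder

noncomputable section

/- ### Auxiliary lemmas -/

lemma aux_trace_nonneg {d : ℕ} {A : Matrix (Fin d) (Fin d) ℂ} (hA : A.PosSemidef) :
    0 ≤ A.trace := by
  rw [Matrix.trace]
  apply Finset.sum_nonneg
  intro i _
  have h := hA.dotProduct_mulVec_nonneg (Pi.single i 1)
  have e : star (Pi.single i 1 : Fin d → ℂ) ⬝ᵥ A *ᵥ Pi.single i 1 = A i i := by
    simp [dotProduct, Matrix.mulVec, Pi.single_apply, Pi.star_apply, Finset.sum_ite_eq]
  rwa [e] at h

set_option maxHeartbeats 1000000 in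
lemma aux_trace_mul_nonneg {d : ℕ} {A B : Matrix (Fin d) (Fin d) ℂ}
    (hA : A.PosSemidef) (hB : B.PosSemidef) : 0 ≤ (A * B).trace := by
  open scoped MatrixOrder in
  obtain ⟨a, rfl⟩ := CStarAlgebra.nonneg_iff_eq_star_mul_self.mp hA.nonneg
  rw [mul_assoc, Matrix.trace_mul_comm]
  have h3 := hB.mul_mul_conjTranspose_same a
  rw [Matrix.star_eq_conjTranspose]
  exact aux_trace_nonneg h3

lemma aux_unitary_conj {d : ℕ} (u : Matrix.unitaryGroup (Fin d) ℂ)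
    {A : Matrix (Fin d) (Fin d) ℂ} (hA : A.PosSemidef) :
    ((u : Matrix (Fin d) (Fin d) ℂ) * A * (u : Matrix (Fin d) (Fin d) ℂ)ᴴ).PosSemidef :=
  hA.mul_mul_conjTranspose_same _

lemma aux_trace_conj {d : ℕ} (u : Matrix.unitaryGroup (Fin d) ℂ)
    (A : Matrix (Fin d) (Fin d) ℂ) :
    ((u : Matrix (Fin d) (Fin d) ℂ) * A * (u : Matrix (Fin d) (Fin d) ℂ)ᴴ).trace = A.trace := by
  rw [Matrix.trace_mul_cycle]
  have h : (u : Matrix (Fin d) (Fin d) ℂ)ᴴ * (u : Matrix (Fin d) (Fin d) ℂ) = 1 := by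
    simpa [Matrix.star_eq_conjTranspose] using u.2.1
  rw [h, one_mul]

lemma aux_grpAvg_conj {d : ℕ} {G : Type*} [Fintype G] [Group G]
    (U : G →* Matrix.unitaryGroup (Fin d) ℂ) (X : Matrix (Fin d) (Fin d) ℂ) (h : G) :
    (U h : Matrix (Fin d) (Fin d) ℂ) * grpAvg U X * (U h : Matrix (Fin d) (Fin d) ℂ)ᴴ
      = grpAvg U X := by
  unfold grpAvg
  rw [Matrix.mul_smul, Matrix.smul_mul]
  congr 1
  rw [Finset.mul_sum, Finset.sum_mul]
  refine Fintype.sum_equiv (Equiv.mulLeft h) _ _ fun g => ?_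
  have hU : ∀ a b : G, (U (a * b) : Matrix (Fin d) (Fin d) ℂ)
      = (U a : Matrix (Fin d) (Fin d) ℂ) * (U b : Matrix (Fin d) (Fin d) ℂ) := by
    intro a b; rw [_root_.map_mul]; rfl
  simp only [Equiv.coe_mulLeft, hU, Matrix.conjTranspose_mul]
  noncomm_ring

lemma aux_smul_real {d : ℕ} (r : ℝ) (X : Matrix (Fin d) (Fin d) ℂ) :
    r • X = (r : ℂ) • X := by
  ext i j; simp [Complex.real_smul]

lemma aux_psd_smul {d : ℕ} {c : ℂ} (hc : 0 ≤ c) {A : Matrix (Fin d) (Fin d) ℂ}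
    (hA : A.PosSemidef) : (c • A).PosSemidef := by
  have hcr : star c = c := by
    have h := Complex.le_def.mp hc
    apply Complex.ext <;> simp [Complex.conj_re, Complex.conj_im, ← h.2]
  constructor
  · unfold Matrix.IsHermitian
    rw [Matrix.conjTranspose_smul, hA.1.eq, hcr]
  · exact (hA.smul hc).2

lemma aux_psd_sum {d : ℕ} {ι : Type*} (s : Finset ι) (f : ι → Matrix (Fin d) (Fin d) ℂ)
    (h : ∀ i ∈ s, (f i).PosSemidef) : (∑ i ∈ s, f i).PosSemidef := by
  classical
  induction s using Finset.induction with
  | empty => simpa using Matrix.PosSemidef.zero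
  | insert _ _ hx ih =>
    rw [Finset.sum_insert hx]
    exact (h _ (Finset.mem_insert_self _ _)).add (ih fun i hi => h i (Finset.mem_insert_of_mem hi))

lemma aux_card_ne {G : Type*} [Fintype G] [Group G] : ((Fintype.card G : ℂ)) ≠ 0 := by
  exact_mod_cast Nat.cast_ne_zero.mpr Fintype.card_ne_zero

/-- grpAvg of a state is a symmetric state. -/
lemma aux_grpAvg_state {d : ℕ} {G : Type*} [Fintype G] [Group G]
    (U : G →* Matrix.unitaryGroup (Fin d) ℂ) {ρ : Matrix (Fin d) (Fin d) ℂ}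
    (hρ : IsState ρ) : IsState (grpAvg U ρ) := by
  constructor
  · have hc : (0:ℂ) ≤ ((Fintype.card G : ℂ))⁻¹ := by
      have h7 : ((Fintype.card G : ℂ))⁻¹ = ((((Fintype.card G : ℝ))⁻¹ : ℝ) : ℂ) := by
        push_cast; ring
      rw [h7]
      exact Complex.zero_le_real.mpr (inv_nonneg.mpr (Nat.cast_nonneg _))
    exact aux_psd_smul hc (aux_psd_sum _ _ fun g _ => aux_unitary_conj (U g) hρ.1)
  · unfold grpAvg
    rw [Matrix.trace_smul, Matrix.trace_sum]
    simp only [aux_trace_conj, hρ.2, Finset.sum_const, Finset.card_univ, nsmul_eq_mul, mul_one,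
      smul_eq_mul]
    exact inv_mul_cancel₀ aux_card_ne

lemma aux_grpAvg_idem {d : ℕ} {G : Type*} [Fintype G] [Group G]
    (U : G →* Matrix.unitaryGroup (Fin d) ℂ) (ρ : Matrix (Fin d) (Fin d) ℂ) :
    grpAvg U (grpAvg U ρ) = grpAvg U ρ := by
  have h1 : grpAvg U (grpAvg U ρ) = (Fintype.card G : ℂ)⁻¹ •
      ∑ g : G, (U g : Matrix (Fin d) (Fin d) ℂ) * grpAvg U ρ *
        ((U g : Matrix (Fin d) (Fin d) ℂ))ᴴ := rfl
  rw [h1]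
  simp only [aux_grpAvg_conj, Finset.sum_const, Finset.card_univ]
  rw [← Nat.cast_smul_eq_nsmul ℂ, smul_smul, inv_mul_cancel₀ aux_card_ne, one_smul]

theorem roa_discrimination_upper_bound {d : ℕ} (hd : 1 ≤ d) {G : Type*} [Fintype G] [Group G]
    (U : G →* Matrix.unitaryGroup (Fin d) ℂ)
    (ρ : Matrix (Fin d) (Fin d) ℂ) (hρ : IsState ρ)
    (p : G → ℝ) (hp : ∀ g, 0 ≤ p g) (hp1 : ∑ g, p g = 1)
    (M : G → Matrix (Fin d) (Fin d) ℂ) (hM : ∀ g, (M g).PosSemidef)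
    (hM1 : ∑ g, M g = 1) :
    ∑ g, p g * (((U g : Matrix (Fin d) (Fin d) ℂ) * ρ *
        ((U g : Matrix (Fin d) (Fin d) ℂ))ᴴ) * M g).trace.re
      ≤ (1 + RoA U ρ) * Finset.univ.sup' ⟨1, Finset.mem_univ 1⟩ p := by
  classical
  set S := { s : ℝ | 0 ≤ s ∧ ∃ σ : Matrix (Fin d) (Fin d) ℂ,
    IsState σ ∧ grpAvg U σ = σ ∧ ((1 + s) • σ - ρ).PosSemidef } with hS
  set mp := Finset.univ.sup' ⟨1, Finset.mem_univ 1⟩ p with hmp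
  have hmp0 : 0 ≤ mp := le_trans (hp 1) (Finset.le_sup' p (Finset.mem_univ 1))
  have hple : ∀ g, p g ≤ mp := fun g => Finset.le_sup' p (Finset.mem_univ g)
  -- the key bound for each feasible s
  have key : ∀ s ∈ S, ∑ g, p g * (((U g : Matrix (Fin d) (Fin d) ℂ) * ρ *
      ((U g : Matrix (Fin d) (Fin d) ℂ))ᴴ) * M g).trace.re ≤ (1 + s) * mp := by
    rintro s ⟨hs0, σ, ⟨hσpsd, hσtr⟩, hσsym, hfeas⟩
    have hσconj : ∀ g : G, (U g : Matrix (Fin d) (Fin d) ℂ) * σ *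
        (U g : Matrix (Fin d) (Fin d) ℂ)ᴴ = σ := by
      intro g; rw [← hσsym, aux_grpAvg_conj]
    have step1 : ∀ g : G, (((U g : Matrix (Fin d) (Fin d) ℂ) * ρ *
        ((U g : Matrix (Fin d) (Fin d) ℂ))ᴴ) * M g).trace.re
        ≤ (1 + s) * ((σ * M g).trace.re) := by
      intro g
      set u := (U g : Matrix (Fin d) (Fin d) ℂ)
      have hconj : ((1 + s) • σ - u * ρ * uᴴ).PosSemidef := by
        have h4 := aux_unitary_conj (U g) hfeas
        have heq : u * ((1 + s) • σ - ρ) * uᴴ = (1 + s) • σ - u * ρ * uᴴ := by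
          rw [Matrix.mul_sub, Matrix.sub_mul, Matrix.mul_smul, Matrix.smul_mul, hσconj g]
        rwa [heq] at h4
      have h0 : 0 ≤ (((1 + s) • σ - u * ρ * uᴴ) * M g).trace :=
        aux_trace_mul_nonneg hconj (hM g)
      have hexp : (((1 + s) • σ - u * ρ * uᴴ) * M g).trace
          = (1 + s) • (σ * M g).trace - ((u * ρ * uᴴ) * M g).trace := by
        rw [Matrix.sub_mul, Matrix.smul_mul, Matrix.trace_sub, Matrix.trace_smul]
      rw [hexp] at h0
      have h5 := (Complex.le_def.mp h0).1
      simp only [Complex.zero_re, Complex.sub_re, Complex.real_smul, Complex.mul_re,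
        Complex.ofReal_re, Complex.ofReal_im, zero_mul, sub_zero] at h5
      linarith
    calc ∑ g, p g * (((U g : Matrix (Fin d) (Fin d) ℂ) * ρ *
          ((U g : Matrix (Fin d) (Fin d) ℂ))ᴴ) * M g).trace.re
        ≤ ∑ g, mp * ((1 + s) * (σ * M g).trace.re) := by
          apply Finset.sum_le_sum
          intro g _
          have htr : 0 ≤ (σ * M g).trace.re :=
            (Complex.le_def.mp (aux_trace_mul_nonneg hσpsd (hM g))).1
          have h1 : p g * (((U g : Matrix (Fin d) (Fin d) ℂ) * ρ *
              ((U g : Matrix (Fin d) (Fin d) ℂ))ᴴ) * M g).trace.re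
              ≤ p g * ((1 + s) * (σ * M g).trace.re) :=
            mul_le_mul_of_nonneg_left (step1 g) (hp g)
          refine h1.trans (mul_le_mul_of_nonneg_right (hple g) ?_)
          positivity
      _ = (1 + s) * mp := by
          have hsum : ∑ g, (σ * M g).trace = 1 := by
            rw [← Matrix.trace_sum, ← Finset.mul_sum, hM1, mul_one, hσtr]
          rw [← Finset.mul_sum, ← Finset.mul_sum, ← Complex.re_sum, hsum]
          simp [mul_comm]
  -- S is nonempty
  have hSne : S.Nonempty := by
    refine ⟨(Fintype.card G : ℝ) - 1, ?_, grpAvg U ρ, aux_grpAvg_state U hρ,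
      aux_grpAvg_idem U ρ, ?_⟩
    · have : (1 : ℝ) ≤ (Fintype.card G : ℝ) := by exact_mod_cast Fintype.card_pos
      linarith
    · have h1 : (1 + ((Fintype.card G : ℝ) - 1)) • grpAvg U ρ
          = ∑ g : G, (U g : Matrix (Fin d) (Fin d) ℂ) * ρ *
            ((U g : Matrix (Fin d) (Fin d) ℂ))ᴴ := by
        rw [aux_smul_real]
        unfold grpAvg
        rw [smul_smul]
        have h2 : ((1 + ((Fintype.card G : ℝ) - 1) : ℝ) : ℂ) * (Fintype.card G : ℂ)⁻¹ = 1 := by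
          push_cast
          field_simp
          ring
        rw [h2, one_smul]
      rw [h1]
      have h3 : ∑ g : G, (U g : Matrix (Fin d) (Fin d) ℂ) * ρ *
          ((U g : Matrix (Fin d) (Fin d) ℂ))ᴴ
          = ρ + ∑ g ∈ Finset.univ.erase 1, (U g : Matrix (Fin d) (Fin d) ℂ) * ρ *
            ((U g : Matrix (Fin d) (Fin d) ℂ))ᴴ := by
        rw [← Finset.add_sum_erase _ _ (Finset.mem_univ 1)]
        congr 1
        simp
      rw [h3, add_sub_cancel_left]
      exact aux_psd_sum _ _ fun g _ => aux_unitary_conj (U g) hρ.1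
  -- conclude
  have hRoA : RoA U ρ = sInf S := rfl
  rcases eq_or_lt_of_le hmp0 with hmp0' | hmp0'
  · obtain ⟨s, hsS⟩ := hSne
    have h6 := key s hsS
    rw [← hmp0'] at h6 ⊢
    simpa using h6
  · refine le_of_forall_pos_le_add fun ε hε => ?_
    obtain ⟨a, haS, ha⟩ := Real.lt_sInf_add_pos hSne (div_pos hε hmp0')
    have h1 := key a haS
    have h2 : (1 + a) * mp ≤ (1 + (sInf S + ε / mp)) * mp :=
      mul_le_mul_of_nonneg_right (by linarith) hmp0
    calc ∑ g, p g * (((U g : Matrix (Fin d) (Fin d) ℂ) * ρ *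
          ((U g : Matrix (Fin d) (Fin d) ℂ))ᴴ) * M g).trace.re
        ≤ (1 + a) * mp := h1
      _ ≤ (1 + (sInf S + ε / mp)) * mp := h2
      _ = (1 + RoA U ρ) * mp + ε := by
          rw [hRoA]; field_simp; ring
end
end

section
/- The robustness of asymmetry is bounded by the group size: for every state ρ on ℂ^d, RoA(ρ) ≤ |G| − 1. -/
open Matrix ComplexOrder

noncomputable section

lemma posSemidef_sum {d : ℕ} {ι : Type*} (s : Finset ι)
    (f : ι → Matrix (Fin d) (Fin d) ℂ) (hf : ∀ i ∈ s, (f i).PosSemidef) :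
    (∑ i ∈ s, f i).PosSemidef := by
  classical
  induction s using Finset.induction_on with
  | empty => simpa using Matrix.PosSemidef.zero
  | insert _ _ h ih =>
    rw [Finset.sum_insert h]
    exact ((hf _ (Finset.mem_insert_self _ _)).add
      (ih fun i hi => hf i (Finset.mem_insert_of_mem hi)))

lemma psd_smul_of_nonneg {d : ℕ} {M : Matrix (Fin d) (Fin d) ℂ} (hM : M.PosSemidef)
    {c : ℂ} (hc : 0 ≤ c) : (c • M).PosSemidef := by
  have him : (starRingEnd ℂ) c = c := by
    rw [Complex.conj_eq_iff_im]
    exact ((Complex.nonneg_iff).mp hc).2.symm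
  rw [starRingEnd_apply] at him
  constructor
  · unfold Matrix.IsHermitian
    rw [Matrix.conjTranspose_smul, hM.1.eq, him]
  · intro x
    convert mul_nonneg hc (hM.2 x) using 1
    simp only [Matrix.smul_apply, smul_eq_mul, Finsupp.mul_sum]
    apply Finsupp.sum_congr; intro i _; apply Finsupp.sum_congr; intro j _; ring

theorem roa_le_card_sub_one {d : ℕ} (hd : 1 ≤ d) {G : Type*} [Fintype G] [Group G]
    (U : G →* Matrix.unitaryGroup (Fin d) ℂ)
    (ρ : Matrix (Fin d) (Fin d) ℂ) (hρ : IsState ρ) :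
    RoA U ρ ≤ (Fintype.card G : ℝ) - 1 := by
  classical
  have hcard : 0 < Fintype.card G := Fintype.card_pos
  have hcardC : (Fintype.card G : ℂ) ≠ 0 := Nat.cast_ne_zero.mpr hcard.ne'
  set A : G → Matrix (Fin d) (Fin d) ℂ :=
    fun g => (U g : Matrix (Fin d) (Fin d) ℂ) * ρ * ((U g : Matrix (Fin d) (Fin d) ℂ))ᴴ
    with hA
  set S : Matrix (Fin d) (Fin d) ℂ := ∑ g : G, A g with hS
  set σ : Matrix (Fin d) (Fin d) ℂ := (Fintype.card G : ℂ)⁻¹ • S with hσ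
  have hσavg : grpAvg U ρ = σ := rfl
  -- each summand is PSD
  have hApsd : ∀ g, (A g).PosSemidef := fun g =>
    hρ.1.mul_mul_conjTranspose_same _
  have hSpsd : S.PosSemidef := posSemidef_sum _ _ fun g _ => hApsd g
  have hcnn : (0:ℂ) ≤ (Fintype.card G : ℂ)⁻¹ := by
    have : ((Fintype.card G : ℂ))⁻¹ = (((Fintype.card G : ℝ)⁻¹ : ℝ) : ℂ) := by push_cast; ring
    rw [this]
    exact_mod_cast (by positivity : (0:ℝ) ≤ (Fintype.card G : ℝ)⁻¹)
  have hσpsd : σ.PosSemidef := psd_smul_of_nonneg hSpsd hcnn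
  -- trace of each summand
  have hAtr : ∀ g, (A g).trace = 1 := by
    intro g
    have hu : ((U g : Matrix (Fin d) (Fin d) ℂ))ᴴ * (U g : Matrix (Fin d) (Fin d) ℂ) = 1 :=
      UnitaryGroup.star_mul_self (U g)
    calc (A g).trace
        = (((U g : Matrix (Fin d) (Fin d) ℂ))ᴴ * (U g : Matrix (Fin d) (Fin d) ℂ) * ρ).trace := by
          rw [hA]; rw [Matrix.trace_mul_cycle]
      _ = ρ.trace := by rw [hu, one_mul]
      _ = 1 := hρ.2
  have hσtr : σ.trace = 1 := by
    rw [hσ, Matrix.trace_smul, hS, Matrix.trace_sum]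
    simp only [hAtr]
    simp [hcardC]
  -- invariance: U h * σ * (U h)ᴴ = σ
  have hinv : ∀ h : G,
      (U h : Matrix (Fin d) (Fin d) ℂ) * σ * ((U h : Matrix (Fin d) (Fin d) ℂ))ᴴ = σ := by
    intro h
    rw [hσ, Matrix.mul_smul, Matrix.smul_mul, hS]
    congr 1
    rw [Finset.mul_sum, Finset.sum_mul]
    rw [← Equiv.sum_comp (Equiv.mulLeft h) A]
    apply Finset.sum_congr rfl
    intro g _
    simp only [hA, Equiv.coe_mulLeft, _root_.map_mul, MulMemClass.coe_mul,
      Matrix.conjTranspose_mul]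
    noncomm_ring
  have hσsym : grpAvg U σ = σ := by
    unfold grpAvg
    have : ∀ g : G,
        (U g : Matrix (Fin d) (Fin d) ℂ) * σ * ((U g : Matrix (Fin d) (Fin d) ℂ))ᴴ = σ :=
      hinv
    simp only [this, Finset.sum_const, Finset.card_univ, ← Nat.cast_smul_eq_nsmul ℂ, smul_smul]
    rw [inv_mul_cancel₀ hcardC, one_smul]
  -- the PSD condition
  have hkey : ((1 + ((Fintype.card G : ℝ) - 1)) • σ - ρ).PosSemidef := by
    have h1 : (1 + ((Fintype.card G : ℝ) - 1)) = (Fintype.card G : ℝ) := by ring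
    rw [h1]
    have h2 : (Fintype.card G : ℝ) • σ = S := by
      rw [hσ]
      ext i j
      simp only [Matrix.smul_apply, Complex.real_smul, smul_eq_mul]
      push_cast
      rw [← mul_assoc, mul_inv_cancel₀ hcardC, one_mul]
    rw [h2]
    have hA1 : A 1 = ρ := by
      simp [hA]
    have : S - ρ = ∑ g ∈ Finset.univ.erase 1, A g := by
      rw [hS, ← Finset.add_sum_erase _ A (Finset.mem_univ (1 : G)), hA1]
      abel
    rw [this]
    exact posSemidef_sum _ _ fun g _ => hApsd g
  -- conclude
  apply csInf_le
  · exact ⟨0, fun x hx => hx.1⟩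
  · refine ⟨by simpa using (Nat.one_le_cast.mpr hcard : (1:ℝ) ≤ _), σ, ⟨hσpsd, hσtr⟩, hσsym, hkey⟩
end
end

section
/- The robustness of coherence is sandwiched by the ℓ1-norm of coherence: for every d ≥ 2 and every state ρ on ℂ^d, C_ℓ1(ρ)/(d−1) ≤ RoC(ρ) ≤ C_ℓ1(ρ). -/
open Matrix ComplexOrder

noncomputable section

/-- The robustness of coherence (with respect to the standard basis). -/
def RoC {d : ℕ} (ρ : Matrix (Fin d) (Fin d) ℂ) : ℝ :=
  sInf { s : ℝ | 0 ≤ s ∧ ∃ δ : Matrix (Fin d) (Fin d) ℂ,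
    IsState δ ∧ δ.IsDiag ∧ ((1 + s) • δ - ρ).PosSemidef }

/-- The ℓ₁-norm of coherence: sum of absolute values of off-diagonal entries. -/
def Cl1 {d : ℕ} (ρ : Matrix (Fin d) (Fin d) ℂ) : ℝ :=
  ∑ i, ∑ j, if i = j then 0 else ‖ρ i j‖

/-! ### Auxiliary lemmas -/

lemma psd_diag_entry {d : ℕ} {M : Matrix (Fin d) (Fin d) ℂ} (hM : M.PosSemidef) (i : Fin d) :
    0 ≤ M i i := by
  have := hM.dotProduct_mulVec_nonneg (Pi.single i 1)
  simpa [Matrix.mulVec_single, dotProduct, Pi.single_apply, apply_ite,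
    Finset.sum_ite_eq'] using this

lemma quad_two {d : ℕ} (M : Matrix (Fin d) (Fin d) ℂ) (i j : Fin d) (c : ℂ) :
    star (Pi.single i 1 + c • (Pi.single j 1 : Fin d → ℂ)) ⬝ᵥ
      (M *ᵥ (Pi.single i 1 + c • (Pi.single j 1 : Fin d → ℂ)))
      = M i i + c * M i j + star c * M j i + star c * c * M j j := by
  simp only [star_add, star_smul, Matrix.mulVec_add, Matrix.mulVec_smul,
    Matrix.mulVec_single, dotProduct_add, add_dotProduct,
    dotProduct_smul, smul_dotProduct]
  simp [dotProduct, Pi.single_apply, apply_ite, Finset.sum_ite_eq',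
    smul_eq_mul, Finset.mul_sum]
  ring

lemma psd_offdiag {d : ℕ} {M : Matrix (Fin d) (Fin d) ℂ} (hM : M.PosSemidef) {i j : Fin d}
    (hij : i ≠ j) : 2 * ‖M i j‖ ≤ (M i i).re + (M j j).re := by
  have hi := (psd_diag_entry hM i).1
  have hj := (psd_diag_entry hM j).1
  simp only [Complex.zero_re] at hi hj
  by_cases hz : M i j = 0
  · simp only [hz, norm_zero, mul_zero]; linarith
  · set z := M i j with hzdef
    have habs : (‖z‖ : ℂ) ≠ 0 := by
      simpa using norm_ne_zero_iff.mpr hz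
    set c : ℂ := -(star z) / (‖z‖) with hc
    have hji : M j i = star z := (hM.1.apply j i).symm
    have hsq : (starRingEnd ℂ) z * z = ((‖z‖ : ℝ) : ℂ) ^ 2 := by
      rw [mul_comm, Complex.mul_conj, ← Complex.sq_norm]
      push_cast; ring
    have hcz : c * z = -(‖z‖ : ℂ) := by
      rw [hc]; field_simp
      simp only [Complex.star_def]; rw [hsq]
    have hcc : star c * c = 1 := by
      rw [hc]
      simp only [star_div₀, star_neg, star_star, Complex.star_def, Complex.conj_ofReal]
      field_simp
      rw [Complex.conj_conj, mul_comm z _, hsq]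
    have hq := hM.dotProduct_mulVec_nonneg (Pi.single i 1 + c • (Pi.single j 1 : Fin d → ℂ))
    rw [quad_two M i j c] at hq
    have hcji : star c * M j i = -(‖z‖ : ℂ) := by
      rw [hji, ← star_mul' c z, hcz]
      simp [Complex.star_def, Complex.conj_ofReal]
    rw [hcz, hcji, hcc, one_mul] at hq
    have := hq.1
    simp only [Complex.add_re, Complex.neg_re, Complex.ofReal_re, Complex.zero_re] at this
    linarith

lemma sum_erase_ite {M : Type*} [AddCommMonoid M] {d : ℕ} (h : Fin d → M) (a : Fin d) :
    (∑ b ∈ Finset.univ.erase a, h b) = ∑ b, if b = a then 0 else h b := by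
  rw [← Finset.filter_ne' Finset.univ a, Finset.sum_filter]
  exact Finset.sum_congr rfl fun b _ => by split <;> simp_all

lemma sum_erase_ite' {M : Type*} [AddCommMonoid M] {d : ℕ} (h : Fin d → M) (a : Fin d) :
    (∑ b ∈ Finset.univ.erase a, h b) = ∑ b, if a = b then 0 else h b := by
  rw [sum_erase_ite]
  exact Finset.sum_congr rfl fun b _ => if_congr eq_comm rfl rfl

lemma sum_erase_symm {d : ℕ} (h : Fin d → Fin d → ℂ) :
    (∑ a, ∑ b ∈ Finset.univ.erase a, h a b) = ∑ a, ∑ b ∈ Finset.univ.erase a, h b a := by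
  have e1 : ∀ a, (∑ b ∈ Finset.univ.erase a, h a b) = ∑ b, if b = a then 0 else h a b :=
    fun a => sum_erase_ite (h a) a
  have e2 : ∀ a, (∑ b ∈ Finset.univ.erase a, h b a) = ∑ b, if b = a then 0 else h b a :=
    fun a => sum_erase_ite (fun b => h b a) a
  simp_rw [e1, e2]
  rw [Finset.sum_comm]
  exact Finset.sum_congr rfl fun x _ => Finset.sum_congr rfl fun y _ =>
    if_congr eq_comm rfl rfl

lemma N_psd {d : ℕ} {ρ : Matrix (Fin d) (Fin d) ℂ} (hρ : ρ.PosSemidef) :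
    (Matrix.of fun a b => if a = b then
        ((∑ c ∈ Finset.univ.erase a, ‖ρ a c‖ : ℝ) : ℂ)
      else -ρ a b).PosSemidef := by
  set N := Matrix.of fun a b => if a = b then
        ((∑ c ∈ Finset.univ.erase a, ‖ρ a c‖ : ℝ) : ℂ)
      else -ρ a b with hN
  rw [posSemidef_iff_dotProduct_mulVec]
  constructor
  · ext a b
    simp only [conjTranspose_apply, hN, Matrix.of_apply]
    by_cases hab : a = b
    · subst hab; simp [Complex.conj_ofReal]
    · have hba : ¬ b = a := fun h => hab h.symm
      simp only [if_neg hab, if_neg hba, star_neg]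
      rw [hρ.1.apply a b]
  · intro x
    set g : Fin d → Fin d → ℂ := fun a b =>
      ((‖ρ a b‖ : ℝ) : ℂ) * ((Complex.normSq (x a) : ℝ) : ℂ)
        - (starRingEnd ℂ) (x a) * ρ a b * x b with hg
    have expand : star x ⬝ᵥ (N *ᵥ x) = ∑ a, ∑ b ∈ Finset.univ.erase a, g a b := by
      simp only [dotProduct, Matrix.mulVec, Pi.star_apply, Complex.star_def]
      refine Finset.sum_congr rfl fun a _ => ?_
      have split : (∑ b, N a b * x b)
          = (∑ b ∈ Finset.univ.erase a, N a b * x b) + N a a * x a :=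
        (Finset.sum_erase_add _ _ (Finset.mem_univ a)).symm
      rw [split, mul_add]
      have h1 : (starRingEnd ℂ) (x a) * (N a a * x a)
          = ∑ b ∈ Finset.univ.erase a, ((‖ρ a b‖ : ℝ) : ℂ)
              * ((Complex.normSq (x a) : ℝ) : ℂ) := by
        have hNaa : N a a = ((∑ c ∈ Finset.univ.erase a, ‖ρ a c‖ : ℝ) : ℂ) := by
          simp [hN]
        rw [hNaa, Complex.ofReal_sum, Finset.sum_mul, Finset.mul_sum]
        refine Finset.sum_congr rfl fun b _ => ?_
        rw [mul_comm ((starRingEnd ℂ) (x a)), mul_assoc, Complex.mul_conj]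
      have h2 : (starRingEnd ℂ) (x a) * (∑ b ∈ Finset.univ.erase a, N a b * x b)
          = ∑ b ∈ Finset.univ.erase a, -((starRingEnd ℂ) (x a) * ρ a b * x b) := by
        rw [Finset.mul_sum]
        refine Finset.sum_congr rfl fun b hb => ?_
        have hba : ¬ a = b := fun h => (Finset.mem_erase.mp hb).1 h.symm
        have hNab : N a b = -ρ a b := by simp [hN, hba]
        rw [hNab]; ring
      rw [h1, h2, hg]
      rw [← Finset.sum_add_distrib]
      refine Finset.sum_congr rfl fun b _ => ?_
      ring
    rw [expand]
    have hdouble : (∑ a, ∑ b ∈ Finset.univ.erase a, g a b)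
        + (∑ a, ∑ b ∈ Finset.univ.erase a, g a b)
        = ∑ a, ∑ b ∈ Finset.univ.erase a, (g a b + g b a) := by
      nth_rewrite 2 [sum_erase_symm g]
      rw [← Finset.sum_add_distrib]
      refine Finset.sum_congr rfl fun a _ => ?_
      rw [← Finset.sum_add_distrib]
    have hterm : ∀ a b : Fin d, a ≠ b → 0 ≤ g a b + g b a := by
      intro a b hab
      have hba : ρ b a = (starRingEnd ℂ) (ρ a b) := (hρ.1.apply b a).symm
      have habs : ‖ρ b a‖ = ‖ρ a b‖ := by
        rw [hba]; exact Complex.norm_conj _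
      set w := (starRingEnd ℂ) (x a) * ρ a b * x b with hw
      have hconj : (starRingEnd ℂ) (x b) * ρ b a * x a = (starRingEnd ℂ) w := by
        rw [hba, hw, (starRingEnd ℂ).map_mul, (starRingEnd ℂ).map_mul, Complex.conj_conj]
        ring
      have hre : w + (starRingEnd ℂ) w = ((2 * w.re : ℝ) : ℂ) := Complex.add_conj w
      have hexp : g a b + g b a
          = (((‖ρ a b‖) * (Complex.normSq (x a) + Complex.normSq (x b))
              - 2 * w.re : ℝ) : ℂ) := by
        rw [hg]
        simp only [habs, hconj, ← hw]
        push_cast at hre ⊢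
        linear_combination -hre
      rw [hexp, Complex.zero_le_real]
      have h1 : w.re ≤ ‖w‖ := Complex.re_le_norm w
      have h2 : ‖w‖ = ‖x a‖ * ‖ρ a b‖ * ‖x b‖ := by
        rw [hw]
        simp only [norm_mul, Complex.norm_conj]
      have h3 : Complex.normSq (x a) = ‖x a‖ ^ 2 := (Complex.sq_norm _).symm
      have h4 : Complex.normSq (x b) = ‖x b‖ ^ 2 := (Complex.sq_norm _).symm
      have h5 : (0:ℝ) ≤ ‖ρ a b‖ := norm_nonneg _
      rw [h3, h4]
      nlinarith [h1, h2, h5,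
        mul_nonneg h5 (sq_nonneg (‖x a‖ - ‖x b‖))]
    have hsum : 0 ≤ (∑ a, ∑ b ∈ Finset.univ.erase a, g a b)
        + (∑ a, ∑ b ∈ Finset.univ.erase a, g a b) := by
      rw [hdouble]
      refine Finset.sum_nonneg fun a _ => Finset.sum_nonneg fun b hb => ?_
      exact hterm a b fun h => (Finset.mem_erase.mp hb).1 (h.symm)
    rw [Complex.le_def] at hsum ⊢
    constructor
    · have := hsum.1; simp only [Complex.add_re, Complex.zero_re] at this ⊢; linarith
    · have := hsum.2; simp only [Complex.add_im, Complex.zero_im] at this ⊢; linarith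

lemma cl1_eq_sum_erase {d : ℕ} (ρ : Matrix (Fin d) (Fin d) ℂ) :
    Cl1 ρ = ∑ a, ∑ c ∈ Finset.univ.erase a, ‖ρ a c‖ := by
  unfold Cl1
  exact Finset.sum_congr rfl fun a _ => (sum_erase_ite' _ a).symm

lemma cl1_nonneg {d : ℕ} (ρ : Matrix (Fin d) (Fin d) ℂ) : 0 ≤ Cl1 ρ := by
  rw [cl1_eq_sum_erase]
  exact Finset.sum_nonneg fun a _ => Finset.sum_nonneg fun c _ => norm_nonneg _

lemma cl1_mem {d : ℕ} (ρ : Matrix (Fin d) (Fin d) ℂ) (hρ : IsState ρ) :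
    Cl1 ρ ∈ { s : ℝ | 0 ≤ s ∧ ∃ δ : Matrix (Fin d) (Fin d) ℂ,
      IsState δ ∧ δ.IsDiag ∧ ((1 + s) • δ - ρ).PosSemidef } := by
  set D : Fin d → ℝ := fun a => ∑ c ∈ Finset.univ.erase a, ‖ρ a c‖ with hD
  have hD0 : ∀ a, 0 ≤ D a := fun a =>
    Finset.sum_nonneg fun c _ => norm_nonneg _
  have hCl1 : Cl1 ρ = ∑ a, D a := cl1_eq_sum_erase ρ
  set s := Cl1 ρ with hs
  have hs0 : 0 ≤ s := cl1_nonneg ρ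
  have hs1 : (0:ℝ) < 1 + s := by linarith
  have hdiagρ : ∀ i, ρ i i = (((ρ i i).re : ℝ) : ℂ) ∧ 0 ≤ (ρ i i).re := by
    intro i
    have h := psd_diag_entry hρ.1 i
    rw [Complex.le_def] at h
    refine ⟨Complex.ext ?_ ?_, ?_⟩
    · simp
    · simp [← h.2]
    · simpa using h.1
  set f : Fin d → ℝ := fun i => ((ρ i i).re + D i) / (1 + s) with hf
  have hf0 : ∀ i, 0 ≤ f i := fun i =>
    div_nonneg (by have := (hdiagρ i).2; have := hD0 i; linarith) (le_of_lt hs1)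
  set δ := Matrix.diagonal (fun i => ((f i : ℝ) : ℂ)) with hδ
  have htraceρ : (∑ i, (ρ i i).re) = 1 := by
    have := hρ.2
    have h2 : (ρ.trace).re = 1 := by rw [this]; simp
    rw [Matrix.trace] at h2
    simpa [Matrix.diag, Complex.re_sum] using h2
  refine ⟨hs0, δ, ⟨?_, ?_⟩, Matrix.isDiag_diagonal _, ?_⟩
  · exact Matrix.PosSemidef.diagonal fun i => Complex.zero_le_real.mpr (hf0 i)
  · rw [hδ, Matrix.trace_diagonal, ← Complex.ofReal_sum]
    have : (∑ i, f i) = 1 := by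
      rw [hf]
      rw [← Finset.sum_div]
      rw [Finset.sum_add_distrib, htraceρ, ← hCl1]
      rw [div_self (ne_of_gt hs1)]
    rw [this]; simp
  · have heq : (1 + s) • δ - ρ = Matrix.of fun a b => if a = b then
        ((∑ c ∈ Finset.univ.erase a, ‖ρ a c‖ : ℝ) : ℂ)
      else -ρ a b := by
      ext a b
      simp only [Matrix.sub_apply, Matrix.smul_apply, hδ, Matrix.diagonal_apply,
        Matrix.of_apply]
      by_cases hab : a = b
      · subst hab
        have h1 : (1 + s) * f a = (ρ a a).re + D a := by
          rw [hf]; field_simp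
        simp only [if_pos rfl, eq_self_iff_true, if_true, ite_true]
        rw [Complex.real_smul, ← Complex.ofReal_mul, h1, (hdiagρ a).1, hD]
        push_cast
        simp only [Complex.ofReal_re]
        ring
      · simp only [if_neg hab, smul_zero, zero_sub]
    rw [heq]
    exact N_psd hρ.1

theorem roc_l1_sandwich {d : ℕ} (hd : 2 ≤ d)
    (ρ : Matrix (Fin d) (Fin d) ℂ) (hρ : IsState ρ) :
    Cl1 ρ / ((d : ℝ) - 1) ≤ RoC ρ ∧ RoC ρ ≤ Cl1 ρ := by
  have hmem := cl1_mem ρ hρ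
  have hbdd : BddBelow { s : ℝ | 0 ≤ s ∧ ∃ δ : Matrix (Fin d) (Fin d) ℂ,
      IsState δ ∧ δ.IsDiag ∧ ((1 + s) • δ - ρ).PosSemidef } :=
    ⟨0, fun t ht => ht.1⟩
  have hne : { s : ℝ | 0 ≤ s ∧ ∃ δ : Matrix (Fin d) (Fin d) ℂ,
      IsState δ ∧ δ.IsDiag ∧ ((1 + s) • δ - ρ).PosSemidef }.Nonempty := ⟨Cl1 ρ, hmem⟩
  have hd1 : (0:ℝ) < (d:ℝ) - 1 := by
    have : (2:ℝ) ≤ (d:ℝ) := by exact_mod_cast hd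
    linarith
  constructor
  · apply le_csInf hne
    rintro s ⟨hs0, δ, hδstate, hδdiag, hMpsd⟩
    rw [div_le_iff₀ hd1]
    set M := (1 + s) • δ - ρ with hMdef
    set a : Fin d → ℝ := fun i => (M i i).re with ha
    have key : ∀ i j : Fin d, i ≠ j →
        ‖ρ i j‖ ≤ (a i + a j) / 2 := by
      intro i j hij
      have hMij : M i j = -ρ i j := by
        rw [hMdef]
        simp [Matrix.sub_apply, Matrix.smul_apply, hδdiag hij]
      have h := psd_offdiag hMpsd hij
      rw [hMij] at h
      rw [norm_neg] at h
      rw [ha]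
      linarith
    have step1 : Cl1 ρ ≤ ∑ i, ∑ j, (if i = j then 0 else (a i + a j) / 2) := by
      unfold Cl1
      refine Finset.sum_le_sum fun i _ => Finset.sum_le_sum fun j _ => ?_
      by_cases hij : i = j
      · simp [hij]
      · simp only [if_neg hij]
        exact key i j hij
    have inner1 : ∀ i : Fin d, (∑ j, (if i = j then (0:ℝ) else a i))
        = ((d:ℝ) - 1) * a i := by
      intro i
      have h1 : (∑ j : Fin d, (if i = j then (a i) else 0)) = a i := by
        simp
      have h2 : (∑ j : Fin d, (if i = j then (0:ℝ) else a i))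
          = ∑ j : Fin d, ((a i) - (if i = j then (a i) else 0)) :=
        Finset.sum_congr rfl fun j _ => by split <;> ring
      rw [h2, Finset.sum_sub_distrib, h1, Finset.sum_const, Finset.card_univ]
      simp [Fintype.card_fin]
      ring
    have inner2 : ∀ j : Fin d, (∑ i, (if i = j then (0:ℝ) else a j))
        = ((d:ℝ) - 1) * a j := by
      intro j
      have h1 : (∑ i : Fin d, (if i = j then (a j) else 0)) = a j := by
        simp
      have h2 : (∑ i : Fin d, (if i = j then (0:ℝ) else a j))
          = ∑ i : Fin d, ((a j) - (if i = j then (a j) else 0)) :=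
        Finset.sum_congr rfl fun i _ => by split <;> ring
      rw [h2, Finset.sum_sub_distrib, h1, Finset.sum_const, Finset.card_univ]
      simp [Fintype.card_fin]
      ring
    have step2 : (∑ i, ∑ j, (if i = j then (0:ℝ) else (a i + a j) / 2))
        = ((d:ℝ) - 1) * ∑ i, a i := by
      have hsplit : ∀ i j : Fin d, (if i = j then (0:ℝ) else (a i + a j) / 2)
          = (if i = j then (0:ℝ) else a i) / 2 + (if i = j then (0:ℝ) else a j) / 2 := by
        intro i j; split <;> ring
      simp_rw [hsplit, Finset.sum_add_distrib, ← Finset.sum_div]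
      rw [Finset.sum_comm (f := fun i j => (if i = j then (0:ℝ) else a j))]
      simp_rw [inner1, inner2]
      rw [← Finset.mul_sum]
      ring
    have htr : (∑ i, a i) = s := by
      have h1 : M.trace = (((1 + s : ℝ)) : ℂ) - 1 := by
        rw [hMdef, Matrix.trace_sub, Matrix.trace_smul, hδstate.2, hρ.2]
        rw [Complex.real_smul, mul_one]
      have h2 : (M.trace).re = s := by rw [h1]; simp
      rw [Matrix.trace] at h2
      simp only [Matrix.diag, Complex.re_sum] at h2
      rw [ha]
      convert h2 using 1
    calc Cl1 ρ ≤ ∑ i, ∑ j, (if i = j then 0 else (a i + a j) / 2) := step1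
      _ = ((d:ℝ) - 1) * ∑ i, a i := step2
      _ = ((d:ℝ) - 1) * s := by rw [htr]
      _ = s * ((d:ℝ) - 1) := by ring
  · exact csInf_le hbdd hmem
end
end

section
/- Diagonal-entry bound on the ℓ1-norm of coherence: let d ≥ 2, let ρ be a state on ℂ^d, and let p = ρ_{kk} be any diagonal entry of ρ (with p real, 0 ≤ p ≤ 1). Then C_ℓ1(ρ) ≤ (√p + √(1−p)·√(d−1))² − 1. -/
open Matrix ComplexOrder

noncomputable section

-- entry bound
lemma entry_abs_le {d : ℕ} {ρ : Matrix (Fin d) (Fin d) ℂ} (h : ρ.PosSemidef) (i j : Fin d) :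
    ‖ρ i j‖ ≤ Real.sqrt (ρ i i).re * Real.sqrt (ρ j j).re := by
  obtain ⟨B, rfl⟩ : ∃ B : Matrix (Fin d) (Fin d) ℂ, ρ = Bᴴ * B := by
    open scoped MatrixOrder Matrix.Norms.L2Operator in
    exact CStarAlgebra.nonneg_iff_eq_star_mul_self.mp h.nonneg
  have hdiag : ∀ m : Fin d, ((Bᴴ * B) m m).re = ∑ l, ‖B l m‖ ^ 2 := by
    intro m
    simp only [Matrix.mul_apply, conjTranspose_apply, Complex.re_sum]
    congr 1; ext l
    simp [Complex.sq_norm, Complex.normSq_apply, Complex.mul_re]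
  have h1 : ‖(Bᴴ * B) i j‖ ≤ ∑ l, ‖B l i‖ * ‖B l j‖ := by
    rw [Matrix.mul_apply]
    refine (norm_sum_le _ _).trans ?_
    apply le_of_eq
    congr 1; ext l
    simp [conjTranspose_apply, _root_.map_mul]
  refine h1.trans ?_
  rw [hdiag i, hdiag j]
  exact Real.sum_mul_le_sqrt_mul_sqrt _ _ _

lemma diag_re_nonneg {d : ℕ} {ρ : Matrix (Fin d) (Fin d) ℂ} (h : ρ.PosSemidef) (i : Fin d) :
    0 ≤ (ρ i i).re := by
  by_contra hc
  push_neg at hc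
  have h2 := entry_abs_le h i i
  rw [Real.sqrt_eq_zero_of_nonpos hc.le] at h2
  have hz : ‖ρ i i‖ = 0 :=
    le_antisymm (by simpa using h2) (norm_nonneg _)
  have : ρ i i = 0 := by simpa using hz
  rw [this] at hc
  simp at hc

theorem cl1_diagonal_entry_bound {d : ℕ} (hd : 2 ≤ d)
    (ρ : Matrix (Fin d) (Fin d) ℂ) (hρ : IsState ρ) (k : Fin d) :
    Cl1 ρ ≤ (Real.sqrt (ρ k k).re +
        Real.sqrt (1 - (ρ k k).re) * Real.sqrt ((d : ℝ) - 1)) ^ 2 - 1 := by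
  obtain ⟨hpsd, htr⟩ := hρ
  set p : Fin d → ℝ := fun i => (ρ i i).re with hp
  have hp0 : ∀ i, 0 ≤ p i := fun i => diag_re_nonneg hpsd i
  have hsum : ∑ i, p i = 1 := by
    have : (ρ.trace).re = 1 := by rw [htr]; simp
    simpa [Matrix.trace, Matrix.diag, Complex.re_sum] using this
  set S : ℝ := ∑ i, Real.sqrt (p i) with hS
  have hS0 : 0 ≤ S := Finset.sum_nonneg fun i _ => Real.sqrt_nonneg _
  -- Step A : Cl1 ρ ≤ S^2 - 1
  have stepA : Cl1 ρ ≤ S ^ 2 - 1 := by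
    have h1 : Cl1 ρ ≤ ∑ i, ∑ j, (if i = j then 0 else Real.sqrt (p i) * Real.sqrt (p j)) := by
      refine Finset.sum_le_sum fun i _ => Finset.sum_le_sum fun j _ => ?_
      split
      · exact le_refl 0
      · exact entry_abs_le hpsd i j
    refine h1.trans (le_of_eq ?_)
    have hrow : ∀ i : Fin d, ∑ j, (if i = j then 0 else Real.sqrt (p i) * Real.sqrt (p j))
        = Real.sqrt (p i) * S - p i := by
      intro i
      have : ∀ j : Fin d, (if i = j then 0 else Real.sqrt (p i) * Real.sqrt (p j))
          = Real.sqrt (p i) * Real.sqrt (p j)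
            - (if i = j then Real.sqrt (p i) * Real.sqrt (p j) else 0) := by
        intro j; split <;> simp
      rw [Finset.sum_congr rfl fun j _ => this j, Finset.sum_sub_distrib,
        Finset.sum_ite_eq Finset.univ i (fun j => Real.sqrt (p i) * Real.sqrt (p j))]
      simp [← Finset.mul_sum, ← hS, Real.mul_self_sqrt (hp0 i)]
    rw [Finset.sum_congr rfl fun i _ => hrow i, Finset.sum_sub_distrib, ← Finset.sum_mul,
      ← hS, hsum, sq]
  -- Step B : S ≤ √(p k) + √(1 - p k) * √(d - 1)
  have stepB : S ≤ Real.sqrt (p k) + Real.sqrt (1 - p k) * Real.sqrt ((d : ℝ) - 1) := by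
    have hsplit : S = Real.sqrt (p k) + ∑ j ∈ Finset.univ.erase k, Real.sqrt (p j) := by
      rw [hS, ← Finset.add_sum_erase Finset.univ _ (Finset.mem_univ k)]
    rw [hsplit]
    refine add_le_add_right ?_ _
    have hcs : ∑ j ∈ Finset.univ.erase k, Real.sqrt (p j) * Real.sqrt 1
        ≤ Real.sqrt (∑ j ∈ Finset.univ.erase k, p j)
          * Real.sqrt (∑ j ∈ Finset.univ.erase k, (1 : ℝ)) :=
      Real.sum_sqrt_mul_sqrt_le _ hp0 (fun _ => zero_le_one)
    have he1 : ∑ j ∈ Finset.univ.erase k, p j = 1 - p k := by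
      rw [Finset.sum_erase_eq_sub (Finset.mem_univ k), hsum]
    have he2 : ∑ j ∈ Finset.univ.erase k, (1 : ℝ) = (d : ℝ) - 1 := by
      rw [Finset.sum_const, Finset.card_erase_of_mem (Finset.mem_univ k)]
      simp [Nat.cast_sub (le_trans one_le_two hd)]
    simpa [he1, he2, Real.sqrt_one] using hcs
  have hT0 : 0 ≤ Real.sqrt (p k) + Real.sqrt (1 - p k) * Real.sqrt ((d : ℝ) - 1) :=
    le_trans hS0 stepB
  have := pow_le_pow_left₀ hS0 stepB 2
  have hfin : S ^ 2 - 1 ≤ (Real.sqrt (p k)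
      + Real.sqrt (1 - p k) * Real.sqrt ((d : ℝ) - 1)) ^ 2 - 1 := by linarith
  exact stepA.trans hfin
end
end

section
/- Exact robustness of coherence for phase-alignable states: let d ≥ 2 and let ρ be a state on ℂ^d such that there exist real phases φ_0, …, φ_{d−1} with e^{i(φ_i − φ_j)}·ρ_{ij} = |ρ_{ij}| for all i, j (i.e., a diagonal unitary maps ρ to the matrix of absolute values of its entries). Then RoC(ρ) = C_ℓ1(ρ). -/
open Matrix ComplexOrder

noncomputable section

/-- Laplacian-type quadratic forms are nonnegative. -/
lemma key_nonneg {n : ℕ} (w : Fin n → Fin n → ℝ) (hw : ∀ i j, 0 ≤ w i j)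
    (hsym : ∀ i j, w i j = w j i) (z : Fin n → ℂ) :
    0 ≤ ∑ i, ∑ j, (w i j : ℂ) *
      ((starRingEnd ℂ) (z i) * z i - (starRingEnd ℂ) (z i) * z j) := by
  set Q : ℂ := ∑ i, ∑ j, (w i j : ℂ) *
      ((starRingEnd ℂ) (z i) * z i - (starRingEnd ℂ) (z i) * z j) with hQdef
  set t : ℝ := ∑ i, ∑ j, w i j * Complex.normSq (z i - z j) with htdef
  have ht : 0 ≤ t := by
    apply Finset.sum_nonneg; intro i _
    apply Finset.sum_nonneg; intro j _
    exact mul_nonneg (hw i j) (Complex.normSq_nonneg _)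
  have hswap : Q = ∑ i, ∑ j, (w i j : ℂ) *
      ((starRingEnd ℂ) (z j) * z j - (starRingEnd ℂ) (z j) * z i) := by
    rw [hQdef, Finset.sum_comm]
    refine Finset.sum_congr rfl fun i _ => Finset.sum_congr rfl fun j _ => ?_
    rw [hsym i j]
  have h2 : Q + Q = (t : ℂ) := by
    nth_rewrite 2 [hswap]
    rw [hQdef, htdef]
    push_cast
    rw [← Finset.sum_add_distrib]
    refine Finset.sum_congr rfl fun i _ => ?_
    rw [← Finset.sum_add_distrib]
    refine Finset.sum_congr rfl fun j _ => ?_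
    rw [show ((Complex.normSq (z i - z j) : ℝ) : ℂ) = (z i - z j) * (starRingEnd ℂ) (z i - z j) from (Complex.mul_conj _).symm, map_sub]
    ring
  have hQ : Q = ((t / 2 : ℝ) : ℂ) := by
    push_cast
    linear_combination h2 / 2
  rw [hQ]
  exact_mod_cast (by positivity : (0:ℝ) ≤ t / 2)

theorem roc_eq_l1_phase_alignable {d : ℕ} (hd : 2 ≤ d)
    (ρ : Matrix (Fin d) (Fin d) ℂ) (hρ : IsState ρ)
    (φ : Fin d → ℝ)
    (hφ : ∀ i j, Complex.exp (Complex.I * (φ i - φ j)) * ρ i j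
      = ((‖ρ i j‖ : ℝ) : ℂ)) :
    RoC ρ = Cl1 ρ := by
  have hherm : ρ.IsHermitian := hρ.1.1
  -- entries in phase form
  have hρij : ∀ i j, ρ i j = Complex.exp (Complex.I * ((φ j : ℂ) - (φ i : ℂ))) * (‖ρ i j‖ : ℂ) := by
    intro i j
    have h1 : Complex.exp (Complex.I * ((φ j : ℂ) - (φ i : ℂ))) *
        Complex.exp (Complex.I * ((φ i : ℝ) - (φ j : ℝ))) = 1 := by
      rw [← Complex.exp_add, show Complex.I * ((φ j : ℂ) - (φ i : ℂ)) +
        Complex.I * (((φ i : ℝ) : ℂ) - ((φ j : ℝ) : ℂ)) = 0 by ring, Complex.exp_zero]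
    rw [← hφ i j, ← mul_assoc, h1, one_mul]
  have hρdiag : ∀ i, ρ i i = (‖ρ i i‖ : ℂ) := by
    intro i
    have := hφ i i
    simpa using this
  set s := Cl1 ρ with hsdef
  have hs0 : 0 ≤ s := by
    rw [hsdef, Cl1]
    apply Finset.sum_nonneg; intro i _
    apply Finset.sum_nonneg; intro j _
    split_ifs
    · exact le_rfl
    · positivity
  set r : Fin d → ℝ := fun i => ∑ j, ‖ρ i j‖ with hrdef
  have hr0 : ∀ i, 0 ≤ r i := by
    intro i; apply Finset.sum_nonneg; intro j _; positivity
  have habs_sym : ∀ i j, ‖ρ i j‖ = ‖ρ j i‖ := by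
    intro i j
    rw [← (hherm.apply j i)]
    exact (Complex.norm_conj _).symm
  have htr : ∑ i, ρ i i = 1 := hρ.2
  have hdiagsum : ∑ i, ‖ρ i i‖ = 1 := by
    have h1 : ((∑ i, ‖ρ i i‖ : ℝ) : ℂ) = 1 := by
      push_cast
      rw [← htr]
      exact Finset.sum_congr rfl fun i _ => (hρdiag i).symm
    exact_mod_cast h1
  have hrsum : ∑ i, r i = 1 + s := by
    have hsplit : ∀ i, r i = ‖ρ i i‖ + ∑ j, if i = j then 0 else ‖ρ i j‖ := by
      intro i
      rw [hrdef]
      calc ∑ j, ‖ρ i j‖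
          = ∑ j, ((if i = j then ‖ρ i j‖ else 0) +
            (if i = j then 0 else ‖ρ i j‖)) := by
            refine Finset.sum_congr rfl fun j _ => ?_; split_ifs <;> ring
        _ = _ := by
            rw [Finset.sum_add_distrib]
            congr 1
            simp
    calc ∑ i, r i = ∑ i, (‖ρ i i‖ + ∑ j, if i = j then 0 else ‖ρ i j‖) :=
          Finset.sum_congr rfl fun i _ => hsplit i
      _ = (∑ i, ‖ρ i i‖) + s := by rw [Finset.sum_add_distrib]; rfl
      _ = 1 + s := by rw [hdiagsum]
  have h1s : (0:ℝ) < 1 + s := by linarith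
  -- the candidate incoherent state
  set δ : Matrix (Fin d) (Fin d) ℂ := Matrix.diagonal (fun i => ((r i / (1 + s) : ℝ) : ℂ)) with hδdef
  -- membership of Cl1 ρ in the defining set
  have hmem : s ∈ { t : ℝ | 0 ≤ t ∧ ∃ δ : Matrix (Fin d) (Fin d) ℂ,
      IsState δ ∧ δ.IsDiag ∧ ((1 + t) • δ - ρ).PosSemidef } := by
    refine ⟨hs0, δ, ⟨⟨?_, ?_⟩, ?_, ?_⟩⟩
    · rw [hδdef, Matrix.posSemidef_diagonal_iff]
      intro i
      have : (0:ℝ) ≤ r i / (1 + s) := div_nonneg (hr0 i) h1s.le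
      exact_mod_cast this
    · rw [hδdef, Matrix.trace_diagonal]
      have : ∑ i, (r i / (1 + s)) = 1 := by
        rw [← Finset.sum_div, hrsum, div_self h1s.ne']
      exact_mod_cast this
    · rw [hδdef]; exact Matrix.isDiag_diagonal _
    · -- positive semidefiniteness of (1+s) • δ - ρ
      have hM : (1 + s) • δ - ρ = Matrix.diagonal (fun i => ((r i : ℝ) : ℂ)) - ρ := by
        congr 1
        rw [hδdef]
        ext i j
        by_cases h : i = j
        · subst h
          simp only [Matrix.smul_apply, Matrix.diagonal_apply_eq]
          rw [Complex.real_smul]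
          push_cast
          field_simp
        · simp [Matrix.diagonal_apply_ne _ h, h]
      rw [hM]
      refine Matrix.PosSemidef.of_dotProduct_mulVec_nonneg ?_ ?_
      · apply Matrix.IsHermitian.sub _ hherm
        apply Matrix.isHermitian_diagonal_of_self_adjoint
        funext i
        exact Complex.conj_ofReal _
      · intro x
        set z : Fin d → ℂ := fun i => Complex.exp (Complex.I * (φ i : ℂ)) * x i with hzdef
        have hconjz : ∀ i, (starRingEnd ℂ) (z i) =
            Complex.exp (-(Complex.I * (φ i : ℂ))) * (starRingEnd ℂ) (x i) := by
          intro i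
          simp only [hzdef, _root_.map_mul]
          congr 1
          rw [← Complex.exp_conj]
          congr 1
          simp
        have hzz : ∀ i, (starRingEnd ℂ) (z i) * z i = (starRingEnd ℂ) (x i) * x i := by
          intro i
          rw [hconjz i]
          simp only [hzdef]
          have h1 : Complex.exp (-(Complex.I * (φ i : ℂ))) * Complex.exp (Complex.I * (φ i : ℂ)) = 1 := by
            rw [← Complex.exp_add, neg_add_cancel, Complex.exp_zero]
          calc Complex.exp (-(Complex.I * (φ i : ℂ))) * (starRingEnd ℂ) (x i) *
              (Complex.exp (Complex.I * (φ i : ℂ)) * x i)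
              = (Complex.exp (-(Complex.I * (φ i : ℂ))) * Complex.exp (Complex.I * (φ i : ℂ))) *
                ((starRingEnd ℂ) (x i) * x i) := by ring
            _ = (starRingEnd ℂ) (x i) * x i := by rw [h1, one_mul]
        have hcross : ∀ i j, ((‖ρ i j‖ : ℝ) : ℂ) * ((starRingEnd ℂ) (z i) * z j) =
            (starRingEnd ℂ) (x i) * (ρ i j * x j) := by
          intro i j
          rw [hconjz i]
          simp only [hzdef]
          conv_rhs => rw [hρij i j]
          rw [show Complex.exp (Complex.I * ((φ j : ℂ) - (φ i : ℂ))) =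
              Complex.exp (-(Complex.I * (φ i : ℂ))) * Complex.exp (Complex.I * (φ j : ℂ)) by
            rw [← Complex.exp_add]; congr 1; ring]
          ring
        have hform : dotProduct (star x)
            ((Matrix.diagonal (fun i => ((r i : ℝ) : ℂ)) - ρ) *ᵥ x) =
            ∑ i, ∑ j, ((‖ρ i j‖ : ℝ) : ℂ) *
              ((starRingEnd ℂ) (z i) * z i - (starRingEnd ℂ) (z i) * z j) := by
          have hrsplit : ∀ i, ((r i : ℝ) : ℂ) = ∑ j, ((‖ρ i j‖ : ℝ) : ℂ) := by
            intro i
            rw [hrdef]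
            push_cast
            rfl
          simp only [dotProduct, Matrix.mulVec, Matrix.sub_apply, Pi.star_apply,
            ← starRingEnd_apply]
          refine Finset.sum_congr rfl fun i _ => ?_
          have expand : ∑ j, (Matrix.diagonal (fun k => ((r k : ℝ) : ℂ)) i j - ρ i j) * x j =
              ((r i : ℝ) : ℂ) * x i - ∑ j, ρ i j * x j := by
            simp only [sub_mul]
            rw [Finset.sum_sub_distrib]
            congr 1
            simp [Matrix.diagonal_apply, ite_mul]
          rw [expand, mul_sub, Finset.mul_sum]
          simp only [mul_sub]
          rw [Finset.sum_sub_distrib]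
          congr 1
          · rw [hrsplit i, Finset.sum_mul, Finset.mul_sum]
            refine Finset.sum_congr rfl fun j _ => ?_
            rw [hzz i]
            ring
          · exact Finset.sum_congr rfl fun j _ => (hcross i j).symm
        rw [hform]
        exact key_nonneg (fun i j => ‖ρ i j‖)
          (fun i j => by positivity) habs_sym z
  -- lower bound: every element of the set is at least Cl1 ρ
  have hlb : ∀ t ∈ { t : ℝ | 0 ≤ t ∧ ∃ δ : Matrix (Fin d) (Fin d) ℂ,
      IsState δ ∧ δ.IsDiag ∧ ((1 + t) • δ - ρ).PosSemidef }, s ≤ t := by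
    rintro t ⟨ht0, σ, ⟨hσpsd, hσtr⟩, hσdiag, hMpsd⟩
    set x : Fin d → ℂ := fun i => Complex.exp (-(Complex.I * (φ i : ℂ))) with hxdef
    have hxx : ∀ i, (starRingEnd ℂ) (x i) * x i = 1 := by
      intro i
      simp only [hxdef]
      rw [← Complex.exp_conj]
      rw [← Complex.exp_add]
      rw [show (starRingEnd ℂ) (-(Complex.I * (φ i : ℂ))) + -(Complex.I * (φ i : ℂ)) = 0 by
        simp [Complex.conj_ofReal]]
      exact Complex.exp_zero
    have hxρ : ∀ i j, (starRingEnd ℂ) (x i) * (ρ i j * x j) = ((‖ρ i j‖ : ℝ) : ℂ) := by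
      intro i j
      simp only [hxdef]
      rw [← Complex.exp_conj]
      have hc : (starRingEnd ℂ) (-(Complex.I * (φ i : ℂ))) = Complex.I * (φ i : ℂ) := by
        simp [Complex.conj_ofReal]
      rw [hc]
      rw [← hφ i j]
      rw [show Complex.I * ((φ i : ℂ) - (φ j : ℂ)) = Complex.I * (φ i : ℂ) + -(Complex.I * (φ j : ℂ)) by push_cast; ring]
      rw [Complex.exp_add]
      ring
    have hq := hMpsd.dotProduct_mulVec_nonneg x
    have hval : dotProduct (star x) ((((1 + t) • σ - ρ)) *ᵥ x) = (((1 + t) - (1 + s) : ℝ) : ℂ) := by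
      rw [← hσdiag.diagonal_diag]
      simp only [dotProduct, Matrix.sub_mulVec, Pi.sub_apply, Pi.star_apply, mul_sub]
      rw [Finset.sum_sub_distrib]
      have h1 : ∑ i, star (x i) * (((1 + t) • Matrix.diagonal σ.diag) *ᵥ x) i = ((1 + t : ℝ) : ℂ) := by
        have : ∀ i, star (x i) * (((1 + t) • Matrix.diagonal σ.diag) *ᵥ x) i
            = ((1 + t : ℝ) : ℂ) * σ i i := by
          intro i
          rw [Matrix.smul_mulVec]
          show (starRingEnd ℂ) (x i) * ((1 + t) • (Matrix.diagonal σ.diag *ᵥ x) i) = _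
          rw [Matrix.mulVec_diagonal, Complex.real_smul]
          calc (starRingEnd ℂ) (x i) * (((1 + t : ℝ) : ℂ) * (σ.diag i * x i))
              = ((1 + t : ℝ) : ℂ) * σ.diag i * ((starRingEnd ℂ) (x i) * x i) := by ring
            _ = ((1 + t : ℝ) : ℂ) * σ i i := by rw [hxx i]; rw [Matrix.diag]; ring
        rw [Finset.sum_congr rfl fun i _ => this i, ← Finset.mul_sum]
        have : ∑ i, σ i i = 1 := hσtr
        rw [this, mul_one]
      have h2 : ∑ i, star (x i) * (ρ *ᵥ x) i = ((1 + s : ℝ) : ℂ) := by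
        have : ∀ i, star (x i) * (ρ *ᵥ x) i = ∑ j, ((‖ρ i j‖ : ℝ) : ℂ) := by
          intro i
          show (starRingEnd ℂ) (x i) * (∑ j, ρ i j * x j) = _
          rw [Finset.mul_sum]
          exact Finset.sum_congr rfl fun j _ => hxρ i j
        rw [Finset.sum_congr rfl fun i _ => this i]
        rw [← hrsum]
        push_cast
        refine Finset.sum_congr rfl fun i _ => ?_
        rw [hrdef]
        push_cast
        rfl
      rw [h1, h2]
      push_cast
      ring
    rw [hval] at hq
    have : (0:ℝ) ≤ (1 + t) - (1 + s) := by exact_mod_cast hq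
    linarith
  -- conclude
  rw [RoC]
  exact le_antisymm (csInf_le ⟨s, hlb⟩ hmem) (le_csInf ⟨s, hmem⟩ hlb)
end
end

section
/- Robustness of coherence of pure states: let d ≥ 2 and let ψ ∈ ℂ^d be a unit vector with components ψ_0, …, ψ_{d−1}. Then the rank-one state ρ = ψψ† (with entries ρ_{ij} = ψ_i · conj(ψ_j)) satisfies RoC(ρ) = (∑_{j} |ψ_j|)² − 1. -/
open Matrix ComplexOrder

noncomputable section

/-- Quadratic form of the rank-one matrix `ψψ†`. -/
lemma quad_outer {d : ℕ} (ψ x : Fin d → ℂ) :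
    star x ⬝ᵥ ((Matrix.of fun i j : Fin d => ψ i * star (ψ j)) *ᵥ x)
      = ((Complex.normSq (∑ j, star (ψ j) * x j) : ℝ) : ℂ) := by
  rw [Complex.normSq_eq_conj_mul_self]
  simp only [dotProduct, mulVec, of_apply, Pi.star_apply, Complex.star_def, map_sum]
  rw [Finset.sum_mul_sum]
  refine Finset.sum_congr rfl fun i _ => ?_
  rw [Finset.mul_sum]
  refine Finset.sum_congr rfl fun j _ => ?_
  simp only [_root_.map_mul, Complex.conj_conj]
  ring

/-- Quadratic form of a real diagonal matrix. -/
lemma quad_diag {d : ℕ} (f : Fin d → ℝ) (x : Fin d → ℂ) :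
    star x ⬝ᵥ ((Matrix.diagonal fun i => (f i : ℂ)) *ᵥ x)
      = ((∑ i, f i * Complex.normSq (x i) : ℝ) : ℂ) := by
  push_cast
  simp only [dotProduct, mulVec_diagonal, Pi.star_apply]
  refine Finset.sum_congr rfl fun i _ => ?_
  rw [Complex.normSq_eq_conj_mul_self, Complex.star_def]
  ring

/-- Cauchy-Schwarz type bound for the rank-one quadratic form. -/
lemma cs_bound {d : ℕ} (ψ x : Fin d → ℂ) :
    Complex.normSq (∑ j, star (ψ j) * x j)
      ≤ (∑ j, ‖ψ j‖) * ∑ i, ‖ψ i‖ * Complex.normSq (x i) := by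
  have h1 : ‖∑ j, star (ψ j) * x j‖
      ≤ ∑ j, ‖ψ j‖ * ‖x j‖ := by
    refine le_trans (norm_sum_le _ _) (le_of_eq ?_)
    exact Finset.sum_congr rfl fun j _ => by
      rw [norm_mul, Complex.star_def, Complex.norm_conj]
  have h2 := Finset.sum_mul_sq_le_sq_mul_sq Finset.univ
    (fun j => Real.sqrt (‖ψ j‖))
    (fun j => Real.sqrt (‖ψ j‖) * ‖x j‖)
  have e1 : ∀ j : Fin d, Real.sqrt (‖ψ j‖) *
      (Real.sqrt (‖ψ j‖) * ‖x j‖)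
      = ‖ψ j‖ * ‖x j‖ := fun j => by
    rw [← mul_assoc, Real.mul_self_sqrt (norm_nonneg _)]
  have e2 : ∀ j : Fin d, Real.sqrt (‖ψ j‖) ^ 2 = ‖ψ j‖ := fun j =>
    Real.sq_sqrt (norm_nonneg _)
  have e3 : ∀ j : Fin d, (Real.sqrt (‖ψ j‖) * ‖x j‖) ^ 2
      = ‖ψ j‖ * Complex.normSq (x j) := fun j => by
    rw [mul_pow, Real.sq_sqrt (norm_nonneg _), Complex.sq_norm]
  simp only [e1, e2, e3] at h2
  calc Complex.normSq (∑ j, star (ψ j) * x j)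
      = ‖∑ j, star (ψ j) * x j‖ ^ 2 := (Complex.sq_norm _).symm
    _ ≤ (∑ j, ‖ψ j‖ * ‖x j‖) ^ 2 := by
        apply pow_le_pow_left₀ (norm_nonneg _) h1
    _ ≤ _ := h2

theorem roc_pure_state {d : ℕ} (hd : 2 ≤ d)
    (ψ : Fin d → ℂ) (hψ : ∑ j, ‖ψ j‖ ^ 2 = 1) :
    RoC (Matrix.of fun i j : Fin d => ψ i * star (ψ j))
      = (∑ j, ‖ψ j‖) ^ 2 - 1 := by
  classical
  set S := ∑ j, ‖ψ j‖ with hSdef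
  have habs : ∀ j, 0 ≤ ‖ψ j‖ := fun j => norm_nonneg _
  have hSnn : 0 ≤ S := Finset.sum_nonneg fun j _ => habs j
  have hS1 : (1 : ℝ) ≤ S ^ 2 := by
    rw [← hψ, sq]
    calc ∑ j, ‖ψ j‖ ^ 2
        ≤ ∑ j, ‖ψ j‖ * S := Finset.sum_le_sum fun j _ => by
          rw [sq]
          exact mul_le_mul_of_nonneg_left
            (Finset.single_le_sum (fun i _ => habs i) (Finset.mem_univ j)) (habs j)
      _ = S * S := by rw [← Finset.sum_mul]
  have hS0 : 0 < S := by nlinarith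
  have key_least : IsLeast { s : ℝ | 0 ≤ s ∧ ∃ δ : Matrix (Fin d) (Fin d) ℂ,
      IsState δ ∧ δ.IsDiag ∧
      ((1 + s) • δ - Matrix.of fun i j : Fin d => ψ i * star (ψ j)).PosSemidef } (S ^ 2 - 1) := by
    constructor
    · -- membership
      refine ⟨by nlinarith, Matrix.diagonal (fun i => ((‖ψ i‖ / S : ℝ) : ℂ)),
        ⟨?_, ?_⟩, Matrix.isDiag_diagonal _, ?_⟩
      · exact Matrix.PosSemidef.diagonal fun i =>
          Complex.zero_le_real.2 (div_nonneg (habs i) hSnn)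
      · rw [Matrix.trace_diagonal, ← Complex.ofReal_sum, ← Finset.sum_div, ← hSdef,
          div_self hS0.ne']
        exact Complex.ofReal_one
      · refine Matrix.PosSemidef.of_dotProduct_mulVec_nonneg ?_ ?_
        · -- Hermitian
          have hρH : (Matrix.of fun i j : Fin d => ψ i * star (ψ j)).IsHermitian := by
            ext i j
            simp only [conjTranspose_apply, of_apply, star_mul', star_star]
            ring
          have hdH : (Matrix.diagonal fun i : Fin d =>
              ((‖ψ i‖ / S : ℝ) : ℂ)).IsHermitian :=
            isHermitian_diagonal_of_self_adjoint _
              (funext fun i => Complex.conj_ofReal _)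
          exact Matrix.IsHermitian.sub (by
            show ((1 + (S ^ 2 - 1)) • _)ᴴ = _
            rw [Matrix.conjTranspose_smul, hdH]
            norm_num) hρH
        · intro x
          rw [Matrix.sub_mulVec, dotProduct_sub, Matrix.smul_mulVec, dotProduct_smul,
            quad_diag, quad_outer, Complex.real_smul, ← Complex.ofReal_mul,
            ← Complex.ofReal_sub, Complex.zero_le_real]
          have hsum : ∑ i, ‖ψ i‖ / S * Complex.normSq (x i)
              = (∑ i, ‖ψ i‖ * Complex.normSq (x i)) / S := by
            rw [Finset.sum_div]
            exact Finset.sum_congr rfl fun i _ => by ring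
          rw [hsum]
          have hcs := cs_bound ψ x
          have hrw : (1 + (S ^ 2 - 1)) * ((∑ i, ‖ψ i‖ * Complex.normSq (x i)) / S)
              = S * ∑ i, ‖ψ i‖ * Complex.normSq (x i) := by
            field_simp
            ring
          rw [hrw]
          linarith
    · -- lower bound
      rintro s ⟨hs0, δ, ⟨hδP, hδtr⟩, hδD, hPSD⟩
      rw [← hδD.diagonal_diag] at hδP hδtr hPSD
      have hdiagnn := Matrix.posSemidef_diagonal_iff.mp hδP
      set f : Fin d → ℝ := fun i => (Matrix.diag δ i).re with hf
      have hf0 : ∀ i, 0 ≤ f i := fun i => (Complex.nonneg_iff.mp (hdiagnn i)).1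
      have hfg : Matrix.diag δ = fun i => ((f i : ℝ) : ℂ) := by
        funext i
        have him := (Complex.nonneg_iff.mp (hdiagnn i)).2
        exact Complex.ext (by simp [hf]) (by simpa [Matrix.diag] using him.symm)
      rw [hfg] at hδtr hPSD
      have hsumf : ∑ i, f i = 1 := by
        rw [Matrix.trace_diagonal, ← Complex.ofReal_sum] at hδtr
        exact_mod_cast hδtr
      have key : ∀ x : Fin d → ℂ, Complex.normSq (∑ j, star (ψ j) * x j)
          ≤ (1 + s) * ∑ i, f i * Complex.normSq (x i) := by
        intro x
        have h := hPSD.dotProduct_mulVec_nonneg x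
        rw [Matrix.sub_mulVec, dotProduct_sub, Matrix.smul_mulVec, dotProduct_smul,
          quad_diag, quad_outer, Complex.real_smul, ← Complex.ofReal_mul,
          ← Complex.ofReal_sub, Complex.zero_le_real] at h
        linarith
      have hψ0 : ∀ i, f i = 0 → ψ i = 0 := by
        intro i hfi
        set y : Fin d → ℂ := Pi.single i 1 with hy
        have h := key y
        have h1 : (∑ j, star (ψ j) * y j) = star (ψ i) := by
          simp [hy, Pi.single_apply, mul_ite]
        have h2 : (∑ j, f j * Complex.normSq (y j)) = f i := by
          have : ∀ j : Fin d, f j * Complex.normSq (y j)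
              = if j = i then f j else 0 := fun j => by
            by_cases hj : j = i <;> simp [hy, Pi.single_apply, hj]
          simp only [this, Finset.sum_ite_eq', Finset.mem_univ, if_true]
        rw [h1, h2, hfi, mul_zero] at h
        have := Complex.normSq_nonneg (star (ψ i))
        have hz : Complex.normSq (star (ψ i)) = 0 := le_antisymm h this
        rw [Complex.star_def, Complex.normSq_conj] at hz
        exact Complex.normSq_eq_zero.mp hz
      set T := ∑ i, Complex.normSq (ψ i) / f i with hT
      have hTnn : 0 ≤ T := Finset.sum_nonneg fun i _ =>
        div_nonneg (Complex.normSq_nonneg _) (hf0 i)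
      set x : Fin d → ℂ := fun i => ψ i / ((f i : ℝ) : ℂ) with hx
      have A1 : ∑ i, f i * Complex.normSq (x i) = T := by
        refine Finset.sum_congr rfl fun i _ => ?_
        by_cases hfi : f i = 0
        · simp [hx, hfi]
        · rw [hx]
          simp only [Complex.normSq_div, Complex.normSq_ofReal]
          field_simp
      have A2 : (∑ j, star (ψ j) * x j) = ((T : ℝ) : ℂ) := by
        rw [hT, Complex.ofReal_sum]
        refine Finset.sum_congr rfl fun j _ => ?_
        rw [hx, Complex.ofReal_div, ← mul_div_assoc, Complex.star_def,
          ← Complex.normSq_eq_conj_mul_self]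
      have hTineq := key x
      rw [A1, A2, Complex.normSq_ofReal] at hTineq
      -- Cauchy-Schwarz: S ^ 2 ≤ T
      have hcs := Finset.sum_mul_sq_le_sq_mul_sq Finset.univ
        (fun i => Real.sqrt (f i)) (fun i => ‖ψ i‖ / Real.sqrt (f i))
      have e1 : ∀ i : Fin d, Real.sqrt (f i) * (‖ψ i‖ / Real.sqrt (f i))
          = ‖ψ i‖ := by
        intro i
        by_cases hfi : f i = 0
        · simp [hfi, hψ0 i hfi]
        · rw [mul_comm, div_mul_cancel₀]
          exact Real.sqrt_ne_zero'.mpr (lt_of_le_of_ne (hf0 i) (Ne.symm hfi))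
      have e2 : ∀ i : Fin d, Real.sqrt (f i) ^ 2 = f i := fun i => Real.sq_sqrt (hf0 i)
      have e3 : ∀ i : Fin d, (‖ψ i‖ / Real.sqrt (f i)) ^ 2
          = Complex.normSq (ψ i) / f i := fun i => by
        rw [div_pow, Real.sq_sqrt (hf0 i), Complex.sq_norm]
      simp only [e1, e2, e3] at hcs
      rw [hsumf, one_mul, ← hSdef, ← hT] at hcs
      have hTpos : 0 < T := by nlinarith
      have hT1s : T ≤ 1 + s := by nlinarith
      nlinarith
  rw [RoC, key_least.csInf_eq]
end
end
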